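/- arXiv:0803.2542 — 10 statements merged into one kernel-verified Lean document; each statement's English description precedes it below -/
import Mathlib

section
/- Let Q be a non-abelian group of order pq, where p < q are primes. Then Q has exactly one subgroup F of order q and exactly q subgroups H₀,…,H_{q−1} of order p, and in the integral group ring ℤQ the identity ∑_{i=0}^{q−1} Ĥ_i + F̂ = Q̂ + q·1 holds, where K̂ := ∑_{k∈K} k for a subgroup K and Q̂ := ∑_{g∈Q} g. -/
open scoped Classical

open Subgroup in
private lemma hat_apply {Q : Type} [Group Q] [Fintype Q] (K : Subgroup Q) (g : Q) :
    (∑ k : K, (MonoidAlgebra.single (k : Q) (1 : ℤ) : MonoidAlgebra ℤ Q)).coeff g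
      = if g ∈ K then 1 else 0 := by
  classical
  rw [MonoidAlgebra.coeff_sum, Finset.sum_apply']
  simp only [MonoidAlgebra.coeff_single, Finsupp.single_apply]
  by_cases h : g ∈ K
  · rw [Finset.sum_eq_single (⟨g, h⟩ : K)]
    · simp [h]
    · intro b _ hb
      rw [if_neg]
      exact fun hbg => hb (Subtype.ext hbg)
    · simp
  · rw [if_neg h]
    apply Finset.sum_eq_zero
    intro k _
    rw [if_neg]
    exact fun hk => h (hk ▸ k.2)

/-- A non-abelian group `Q` of order `pq` (`p < q` primes) has exactly one
subgroup `F` of order `q` and exactly `q` subgroups `H₀, …, H_{q-1}` of order `p`, and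
in `ℤQ` the identity `∑ Ĥᵢ + F̂ = Q̂ + q·1` holds. -/
theorem stmt_1 {p q : ℕ} (hp : p.Prime) (hq : q.Prime) (hpq : p < q)
    (Q : Type) [Group Q] [Fintype Q] (hQ : Fintype.card Q = p * q)
    (hna : ¬ ∀ a b : Q, a * b = b * a) :
    ∃ (F : Subgroup Q) (H : Fin q → Subgroup Q),
      Nat.card F = q ∧ (∀ K : Subgroup Q, Nat.card K = q → K = F) ∧
      Function.Injective H ∧ (∀ i, Nat.card (H i) = p) ∧
      (∀ K : Subgroup Q, Nat.card K = p → ∃ i, K = H i) ∧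
      (∑ i, ∑ k : H i, (MonoidAlgebra.single (k : Q) (1 : ℤ) : MonoidAlgebra ℤ Q))
          + ∑ k : F, MonoidAlgebra.single (k : Q) (1 : ℤ)
        = (∑ g : Q, MonoidAlgebra.single g (1 : ℤ)) + (q : ℕ) • (1 : MonoidAlgebra ℤ Q) := by
  classical
  haveI hpf : Fact p.Prime := ⟨hp⟩
  haveI hqf : Fact q.Prime := ⟨hq⟩
  have hpn : p ≠ q := hpq.ne
  have hcard : Nat.card Q = p * q := by rw [Nat.card_eq_fintype_card, hQ]
  -- factorizations
  have hfp : (Nat.card Q).factorization p = 1 := by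
    rw [hcard, Nat.factorization_mul hp.ne_zero hq.ne_zero]
    simp [hp.factorization, hq.factorization, Finsupp.single_apply, hpn,
      Ne.symm hpn]
  have hfq : (Nat.card Q).factorization q = 1 := by
    rw [hcard, Nat.factorization_mul hp.ne_zero hq.ne_zero]
    simp [hp.factorization, hq.factorization, Finsupp.single_apply, hpn,
      Ne.symm hpn]
  -- Q is not cyclic
  have hnotcyc : ∀ g : Q, orderOf g ≠ p * q := by
    intro g hg
    have hc : IsCyclic Q := isCyclic_of_orderOf_eq_card g (by rw [hcard, hg])
    letI : CommGroup Q := IsCyclic.commGroup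
    exact hna fun a b => mul_comm a b
  -- possible element orders
  have horder : ∀ g : Q, orderOf g = 1 ∨ orderOf g = p ∨ orderOf g = q := by
    intro g
    have hd : orderOf g ∣ p * q := hcard ▸ orderOf_dvd_natCard g
    by_cases hpd : p ∣ orderOf g
    · obtain ⟨c, hc⟩ := hpd
      have hcq : c ∣ q := by
        have h2 := hd
        rw [hc, mul_dvd_mul_iff_left hp.pos.ne'] at h2
        exact h2
      rcases hq.eq_one_or_self_of_dvd c hcq with h1 | h1
      · right; left; rw [hc, h1, mul_one]
      · exact absurd (hc.trans (by rw [h1])) (hnotcyc g)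
    · have hcop : (orderOf g).Coprime p :=
        ((Nat.Prime.coprime_iff_not_dvd hp).mpr hpd).symm
      have hdq : orderOf g ∣ q := hcop.dvd_of_dvd_mul_left hd
      rcases hq.eq_one_or_self_of_dvd _ hdq with h1 | h1
      · exact Or.inl h1
      · exact Or.inr (Or.inr h1)
  -- the unique Sylow q-subgroup
  obtain ⟨Pq⟩ : Nonempty (Sylow q Q) := Sylow.nonempty
  have hPqcard : Nat.card Pq = q := by
    rw [Pq.card_eq_multiplicity, hfq, pow_one]
  have hPqindex : (Pq : Subgroup Q).index = p := by
    have := Subgroup.card_mul_index (Pq : Subgroup Q)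
    rw [hPqcard, hcard, mul_comm p q] at this
    exact Nat.eq_of_mul_eq_mul_left hq.pos this
  have hnq : Nat.card (Sylow q Q) = 1 := by
    have hdvd : Nat.card (Sylow q Q) ∣ p := hPqindex ▸ Pq.card_dvd_index
    rcases hp.eq_one_or_self_of_dvd _ hdvd with h1 | h1
    · exact h1
    · exfalso
      have hmod := card_sylow_modEq_one q Q
      rw [h1] at hmod
      have : p % q = 1 % q := hmod
      rw [Nat.mod_eq_of_lt hpq, Nat.mod_eq_of_lt hq.one_lt] at this
      exact hp.one_lt.ne' this
  haveI hsubq : Subsingleton (Sylow q Q) :=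
    (Nat.card_eq_one_iff_unique.mp hnq).1
  set F : Subgroup Q := (Pq : Subgroup Q) with hFdef
  have hFcard : Nat.card F = q := hPqcard
  have hFuniq : ∀ K : Subgroup Q, Nat.card K = q → K = F := by
    intro K hK
    have hK' : Nat.card K = q ^ (Nat.card Q).factorization q := by
      rw [hfq, pow_one, hK]
    have := Subsingleton.elim (Sylow.ofCard K hK') Pq
    calc K = ((Sylow.ofCard K hK' : Sylow q Q) : Subgroup Q) :=
            (Sylow.coe_ofCard K hK').symm
      _ = F := by rw [this]
  -- number of Sylow p-subgroups is q
  obtain ⟨Pp⟩ : Nonempty (Sylow p Q) := Sylow.nonempty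
  have hPpcard : Nat.card Pp = p := by
    rw [Pp.card_eq_multiplicity, hfp, pow_one]
  have hPpindex : (Pp : Subgroup Q).index = q := by
    have := Subgroup.card_mul_index (Pp : Subgroup Q)
    rw [hPpcard, hcard] at this
    exact Nat.eq_of_mul_eq_mul_left hp.pos this
  have hnp : Nat.card (Sylow p Q) = q := by
    have hdvd : Nat.card (Sylow p Q) ∣ q := hPpindex ▸ Pp.card_dvd_index
    rcases hq.eq_one_or_self_of_dvd _ hdvd with h1 | h1
    · -- if there were a unique subgroup of order p, Q would be too small
      exfalso
      haveI hsubp : Subsingleton (Sylow p Q) :=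
        (Nat.card_eq_one_iff_unique.mp h1).1
      have hPuniq : ∀ K : Subgroup Q, Nat.card K = p → K = (Pp : Subgroup Q) := by
        intro K hK
        have hK' : Nat.card K = p ^ (Nat.card Q).factorization p := by
          rw [hfp, pow_one, hK]
        have := Subsingleton.elim (Sylow.ofCard K hK') Pp
        calc K = ((Sylow.ofCard K hK' : Sylow p Q) : Subgroup Q) :=
                (Sylow.coe_ofCard K hK').symm
          _ = (Pp : Subgroup Q) := by rw [this]
      have hmem : ∀ g : Q, g ∈ (Pp : Subgroup Q) ∨ g ∈ F := by
        intro g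
        rcases horder g with h | h | h
        · left; rw [orderOf_eq_one_iff] at h; rw [h]; exact one_mem _
        · left
          have hz : Nat.card (Subgroup.zpowers g) = p := by
            rw [Nat.card_zpowers, h]
          rw [← hPuniq _ hz]
          exact Subgroup.mem_zpowers g
        · right
          have hz : Nat.card (Subgroup.zpowers g) = q := by
            rw [Nat.card_zpowers, h]
          rw [← hFuniq _ hz]
          exact Subgroup.mem_zpowers g
      have huniv : ((Pp : Subgroup Q) : Set Q) ∪ (F : Set Q) = Set.univ := by
        ext g; exact ⟨fun _ => trivial, fun _ => hmem g⟩
      have hle : p * q ≤ p + q := by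
        calc p * q = Nat.card Q := hcard.symm
          _ = (Set.univ : Set Q).ncard := by
              rw [Set.ncard_univ]
          _ = (((Pp : Subgroup Q) : Set Q) ∪ (F : Set Q)).ncard := by rw [huniv]
          _ ≤ ((Pp : Subgroup Q) : Set Q).ncard + (F : Set Q).ncard :=
              Set.ncard_union_le _ _
          _ = Nat.card (Pp : Subgroup Q) + Nat.card F := by
              rw [← Nat.card_coe_set_eq, ← Nat.card_coe_set_eq]
              rfl
          _ = p + q := by rw [hPpcard, hFcard]
      nlinarith [hp.two_le, hq.two_le]
    · exact h1
  -- enumeration of the Sylow p-subgroups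
  let e : Fin q ≃ Sylow p Q := (Finite.equivFinOfCardEq hnp).symm
  set H : Fin q → Subgroup Q := fun i => ((e i : Sylow p Q) : Subgroup Q) with hHdef
  have hHinj : Function.Injective H := by
    intro i j hij
    exact e.injective (Sylow.ext hij)
  have hHcard : ∀ i, Nat.card (H i) = p := fun i =>
    ((e i).card_eq_multiplicity.trans (by rw [hfp, pow_one]))
  have hHsurj : ∀ K : Subgroup Q, Nat.card K = p → ∃ i, K = H i := by
    intro K hK
    have hK' : Nat.card K = p ^ (Nat.card Q).factorization p := by
      rw [hfp, pow_one, hK]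
    refine ⟨e.symm (Sylow.ofCard K hK'), ?_⟩
    show K = ((e (e.symm (Sylow.ofCard K hK')) : Sylow p Q) : Subgroup Q)
    rw [Equiv.apply_symm_apply]
    exact (Sylow.coe_ofCard K hK').symm
  refine ⟨F, H, hFcard, hFuniq, hHinj, hHcard, hHsurj, ?_⟩
  -- the group-ring identity, checked coefficientwise
  ext g
  have hL : (∑ i, ∑ k : H i, (MonoidAlgebra.single (k : Q) (1 : ℤ) :
      MonoidAlgebra ℤ Q)).coeff g = ∑ i, if g ∈ H i then (1 : ℤ) else 0 := by
    rw [MonoidAlgebra.coeff_sum, Finset.sum_apply']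
    exact Finset.sum_congr rfl fun i _ => hat_apply _ g
  have hR1 : (∑ g' : Q, (MonoidAlgebra.single g' (1 : ℤ) : MonoidAlgebra ℤ Q)).coeff g
      = 1 := by
    rw [MonoidAlgebra.coeff_sum, Finset.sum_apply']
    simp [MonoidAlgebra.coeff_single, Finsupp.single_apply]
  have hR2 : (((q : ℕ) • (1 : MonoidAlgebra ℤ Q)).coeff g) = if g = 1 then (q : ℤ) else 0 := by
    rw [MonoidAlgebra.one_def, MonoidAlgebra.coeff_smul, Finsupp.smul_apply, MonoidAlgebra.coeff_single, Finsupp.single_apply]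
    by_cases hg : g = 1 <;> simp [hg, eq_comm]
  rw [MonoidAlgebra.coeff_add, MonoidAlgebra.coeff_add, Finsupp.add_apply, Finsupp.add_apply, hL, hat_apply, hR1, hR2]
  rcases horder g with h | h | h
  · rw [orderOf_eq_one_iff] at h
    subst h
    simp [one_mem, Finset.card_univ, mul_comm]
    ring
  · have hgne : g ≠ 1 := by
      intro h1; rw [h1, orderOf_one] at h; exact hp.one_lt.ne' h.symm
    have hz : Nat.card (Subgroup.zpowers g) = p := by rw [Nat.card_zpowers, h]
    obtain ⟨i₀, hi₀⟩ := hHsurj _ hz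
    have hiff : ∀ i, g ∈ H i ↔ i = i₀ := by
      intro i
      constructor
      · intro hg
        have hle : Subgroup.zpowers g ≤ H i := Subgroup.zpowers_le.mpr hg
        have heq : Subgroup.zpowers g = H i :=
          Subgroup.eq_of_le_of_card_ge hle (le_of_eq ((hHcard i).trans hz.symm))
        exact hHinj (heq ▸ hi₀)
      · rintro rfl; rw [← hi₀]; exact Subgroup.mem_zpowers g
    have hgF : g ∉ F := by
      intro hg
      have hdv : orderOf g ∣ q := by
        have := Subgroup.card_dvd_of_le (Subgroup.zpowers_le.mpr hg)
        rwa [Nat.card_zpowers, hFcard] at this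
      rw [h] at hdv
      exact hpn ((Nat.prime_dvd_prime_iff_eq hp hq).mp hdv)
    simp only [hiff]
    rw [Finset.sum_ite_eq' Finset.univ i₀ (fun _ => (1 : ℤ))]
    simp [hgF, hgne]
  · have hgne : g ≠ 1 := by
      intro h1; rw [h1, orderOf_one] at h; exact hq.one_lt.ne' h.symm
    have hz : Nat.card (Subgroup.zpowers g) = q := by rw [Nat.card_zpowers, h]
    have hgF : g ∈ F := by
      rw [← hFuniq _ hz]; exact Subgroup.mem_zpowers g
    have hno : ∀ i, g ∉ H i := by
      intro i hg
      have hdv : orderOf g ∣ p := by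
        have := Subgroup.card_dvd_of_le (Subgroup.zpowers_le.mpr hg)
        rwa [Nat.card_zpowers, hHcard i] at this
      rw [h] at hdv
      exact absurd ((Nat.prime_dvd_prime_iff_eq hq hp).mp hdv).symm hpn
    simp [hno, hgF, hgne]
end

section
/- Let Q = (ℤ/p)² and let A be a ℤ-torsion-free ℤQ-module. If the fixed-point submodule A^K is finitely generated as an abelian group for every non-trivial subgroup K ≤ Q, then A is finitely generated as an abelian group. -/
/-- The fixed-point subgroup `A^K` of the action of a subgroup `K ≤ Q` on `A`. -/
def fixedAddSubgroup (Q : Type*) [Group Q] (A : Type*) [AddCommGroup A]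
    [DistribMulAction Q A] (K : Subgroup Q) : AddSubgroup A where
  carrier := {a : A | ∀ k ∈ K, k • a = a}
  zero_mem' := by intro k _; simp
  add_mem' := by intro a b ha hb k hk; rw [smul_add, ha k hk, hb k hk]
  neg_mem' := by intro a ha k hk; rw [smul_neg, ha k hk]

/-- if `Q = (ℤ/p)²` acts on a `ℤ`-torsion-free `ℤQ`-module `A` with `A^K`
finitely generated for every non-trivial subgroup `K ≤ Q`, then `A` is finitely
generated as an abelian group. -/
theorem stmt_2 {p : ℕ} (hp : p.Prime) (A : Type) [AddCommGroup A]
    [DistribMulAction (Multiplicative (ZMod p × ZMod p)) A]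
    (htf : ∀ (a : A) (n : ℕ), 0 < n → n • a = 0 → a = 0)
    (hfix : ∀ K : Subgroup (Multiplicative (ZMod p × ZMod p)), K ≠ ⊥ →
      (fixedAddSubgroup (Multiplicative (ZMod p × ZMod p)) A K).FG) :
    AddGroup.FG A := by
  classical
  haveI := Fact.mk hp
  haveI : NeZero p := ⟨hp.ne_zero⟩
  set Q := Multiplicative (ZMod p × ZMod p) with hQ
  -- every non-identity element has order p
  have hpow : ∀ g : Q, g ^ p = 1 := by
    intro g
    have h : p • g.toAdd = 0 := by
      ext <;> simp [nsmul_eq_mul, ZMod.natCast_self]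
    rw [← ofAdd_toAdd g, ← ofAdd_nsmul, h, ofAdd_zero]
  have hord : ∀ g : Q, g ≠ 1 → orderOf g = p := by
    intro g hg
    rcases hp.eq_one_or_self_of_dvd _ (orderOf_dvd_of_pow_eq_one (hpow g)) with h | h
    · exact absurd (orderOf_eq_one_iff.mp h) hg
    · exact h
  have hcardz : ∀ g : Q, g ≠ 1 → Nat.card (Subgroup.zpowers g) = p := fun g hg =>
    (Nat.card_zpowers g).trans (hord g hg)
  have hsymm : ∀ g k : Q, g ≠ 1 → k ≠ 1 →
      (k ∈ Subgroup.zpowers g ↔ g ∈ Subgroup.zpowers k) := by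
    suffices H : ∀ g k : Q, g ≠ 1 → k ≠ 1 → k ∈ Subgroup.zpowers g → g ∈ Subgroup.zpowers k by
      intro g k hg hk; exact ⟨H g k hg hk, H k g hk hg⟩
    intro g k hg hk hmem
    have hle : Subgroup.zpowers k ≤ Subgroup.zpowers g := Subgroup.zpowers_le.mpr hmem
    have hEq : Subgroup.zpowers k = Subgroup.zpowers g :=
      Subgroup.eq_of_le_of_card_ge hle (by rw [hcardz g hg, hcardz k hk])
    rw [hEq]; exact Subgroup.mem_zpowers g
  -- the big finitely generated submodule
  set M : Submodule ℤ A :=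
    ⨆ K : {K : Subgroup Q // K ≠ ⊥}, AddSubgroup.toIntSubmodule (fixedAddSubgroup Q A K.1)
    with hMdef
  have hMfg : M.FG := by
    refine Submodule.fg_iSup _ fun K => ?_
    rw [Submodule.fg_iff_addSubgroup_fg]
    simpa using hfix K.1 K.2
  have hmemM : ∀ (K : Subgroup Q), K ≠ ⊥ → ∀ x : A, x ∈ fixedAddSubgroup Q A K → x ∈ M := by
    intro K hK x hx
    exact le_iSup (fun K : {K : Subgroup Q // K ≠ ⊥} =>
      AddSubgroup.toIntSubmodule (fixedAddSubgroup Q A K.1)) ⟨K, hK⟩ hx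
  have hQ2 : (1 : ℕ) < p := hp.one_lt
  have hple : p ≤ p ^ 2 := Nat.le_self_pow two_ne_zero p
  have hcardQ : Fintype.card Q = p ^ 2 := by
    simp [hQ, ZMod.card, sq]
  -- everything times p^2 - p lands in M
  have hkey : ∀ a : A, (p ^ 2 - p) • a ∈ M := by
    intro a
    set T : A := ∑ g : Q, g • a with hT
    have hTfix : T ∈ fixedAddSubgroup Q A ⊤ := by
      intro q _
      rw [hT, Finset.smul_sum]
      exact Fintype.sum_equiv (Equiv.mulLeft q) _ _ (fun g => (smul_smul q g a))
    have hTopne : (⊤ : Subgroup Q) ≠ ⊥ := by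
      haveI : Nontrivial (ZMod p) := ZMod.nontrivial p
      obtain ⟨g, hg⟩ := exists_ne (1 : Q)
      intro h
      exact hg (Subgroup.mem_bot.mp (h ▸ Subgroup.mem_top g))
    have hTM : T ∈ M := hmemM ⊤ hTopne T hTfix
    set E : Q → A := fun g => ∑ k ∈ Finset.univ.filter (· ∈ Subgroup.zpowers g), k • a with hEdef
    have hEfix : ∀ g : Q, E g ∈ fixedAddSubgroup Q A (Subgroup.zpowers g) := by
      intro g h hh
      rw [hEdef]
      simp only
      rw [Finset.smul_sum]
      refine Finset.sum_equiv (Equiv.mulLeft h) ?_ ?_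
      · intro i
        simp only [Finset.mem_filter, Finset.mem_univ, true_and, Equiv.coe_mulLeft]
        exact (Subgroup.mul_mem_cancel_left _ hh).symm
      · intro i _
        exact smul_smul h i a
    have hEM : ∀ g : Q, g ≠ 1 → E g ∈ M := fun g hg =>
      hmemM _ (by simpa [Subgroup.zpowers_eq_bot] using hg) _ (hEfix g)
    set s1 : Finset Q := Finset.univ.filter (· ≠ (1 : Q)) with hs1
    -- counting lemma
    have hc : ∀ k : Q, (s1.filter (fun g => k ∈ Subgroup.zpowers g)).card
        = if k = 1 then p ^ 2 - 1 else p - 1 := by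
      intro k
      by_cases hk : k = 1
      · subst hk
        rw [if_pos rfl]
        rw [Finset.filter_true_of_mem (fun g _ => Subgroup.one_mem _)]
        rw [hs1, Finset.filter_ne', Finset.card_erase_of_mem (Finset.mem_univ 1),
          Finset.card_univ, hcardQ]
      · rw [if_neg hk]
        have hset : s1.filter (fun g => k ∈ Subgroup.zpowers g)
            = (Finset.univ.filter (· ∈ Subgroup.zpowers k)).erase 1 := by
          ext g
          simp only [hs1, Finset.filter_filter, Finset.mem_filter, Finset.mem_erase,
            Finset.mem_univ, true_and]
          constructor
          · rintro ⟨hg, hmem⟩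
            exact ⟨hg, (hsymm g k hg hk).mp hmem⟩
          · rintro ⟨hg, hmem⟩
            exact ⟨hg, (hsymm g k hg hk).mpr hmem⟩
        rw [hset, Finset.card_erase_of_mem (by simp [Subgroup.one_mem])]
        have : (Finset.univ.filter (· ∈ Subgroup.zpowers k)).card
            = Nat.card (Subgroup.zpowers k) := by
          rw [Nat.card_eq_fintype_card, ← Fintype.card_subtype]
        rw [this, hcardz k hk]
    -- the double-counting identity
    have hnat : p ^ 2 - 1 = (p - 1) + (p ^ 2 - p) := by omega
    have hS : ∑ g ∈ s1, E g = (p - 1) • T + (p ^ 2 - p) • a := by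
      calc ∑ g ∈ s1, E g
          = ∑ g ∈ s1, ∑ k : Q, if k ∈ Subgroup.zpowers g then k • a else 0 := by
            refine Finset.sum_congr rfl fun g _ => ?_
            rw [hEdef]; exact Finset.sum_filter _ _
        _ = ∑ k : Q, ∑ g ∈ s1, if k ∈ Subgroup.zpowers g then k • a else 0 :=
            Finset.sum_comm
        _ = ∑ k : Q, (s1.filter (fun g => k ∈ Subgroup.zpowers g)).card • (k • a) := by
            refine Finset.sum_congr rfl fun k _ => ?_
            rw [← Finset.sum_filter, Finset.sum_const]
        _ = ∑ k : Q, ((p - 1) • (k • a) + (if k = 1 then (p ^ 2 - p) • (k • a) else 0)) := by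
            refine Finset.sum_congr rfl fun k _ => ?_
            rw [hc k]
            by_cases hk : k = 1
            · rw [if_pos hk, if_pos hk, hnat, add_nsmul]
            · rw [if_neg hk, if_neg hk, add_zero]
        _ = (p - 1) • T + (p ^ 2 - p) • a := by
            rw [Finset.sum_add_distrib, Finset.sum_ite_eq' Finset.univ (1 : Q)
              (fun k => (p ^ 2 - p) • (k • a))]
            rw [if_pos (Finset.mem_univ 1), one_smul, hT, Finset.smul_sum]
    have : (p ^ 2 - p) • a = (∑ g ∈ s1, E g) - (p - 1) • T := by
      rw [hS]; abel
    rw [this]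
    refine sub_mem (Submodule.sum_mem _ fun g hg => ?_) (nsmul_mem hTM _)
    exact hEM g (by simpa [hs1] using hg)
  -- conclude
  have hmpos : 0 < p ^ 2 - p := by
    have : p < p ^ 2 := by nlinarith
    omega
  set φ : A →ₗ[ℤ] A := (p ^ 2 - p : ℕ) • LinearMap.id with hφ
  have hφapp : ∀ x : A, φ x = (p ^ 2 - p) • x := fun x => rfl
  have hinj : Function.Injective φ := by
    intro x y hxy
    have h0 : (p ^ 2 - p) • (x - y) = 0 := by
      rw [smul_sub, ← hφapp, ← hφapp, hxy, sub_self]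
    exact sub_eq_zero.mp (htf (x - y) _ hmpos h0)
  set φ' : A →ₗ[ℤ] M := φ.codRestrict M (fun x => by rw [hφapp]; exact hkey x) with hφ'
  have hinj' : Function.Injective φ' := by
    intro x y hxy
    apply hinj
    have := congrArg (Subtype.val) hxy
    simpa [hφ'] using this
  haveI : Module.Finite ℤ M := Module.Finite.iff_fg.mpr hMfg
  haveI : IsNoetherian ℤ M := isNoetherian_of_isNoetherianRing_of_finite ℤ M
  have hrfg : Module.Finite ℤ (LinearMap.range φ') :=
    Module.Finite.iff_fg.mpr (IsNoetherian.noetherian _)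
  have e : A ≃ₗ[ℤ] LinearMap.range φ' := LinearEquiv.ofInjective φ' hinj'
  have : Module.Finite ℤ A := Module.Finite.equiv e.symm
  exact Module.Finite.iff_addGroup_fg.mp this
end

section
/- Let Q be a non-abelian group of order pq with p < q prime, and let A be a ℤ-torsion-free ℤQ-module. If A^K is finitely generated as an abelian group for every non-trivial subgroup K ≤ Q, then A is finitely generated as an abelian group. -/
/-- if a non-abelian group `Q` of order `pq` (`p < q` primes) acts on a
`ℤ`-torsion-free `ℤQ`-module `A` with `A^K` finitely generated for every non-trivial
subgroup `K ≤ Q`, then `A` is finitely generated as an abelian group. -/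
theorem stmt_3 {p q : ℕ} (hp : p.Prime) (hq : q.Prime) (hpq : p < q)
    (Q : Type) [Group Q] [Fintype Q] (hQ : Fintype.card Q = p * q)
    (hna : ¬ ∀ a b : Q, a * b = b * a)
    (A : Type) [AddCommGroup A] [DistribMulAction Q A]
    (htf : ∀ (a : A) (n : ℕ), 0 < n → n • a = 0 → a = 0)
    (hfix : ∀ K : Subgroup Q, K ≠ ⊥ → (fixedAddSubgroup Q A K).FG) :
    AddGroup.FG A := by
  classical
  have hq1 : 1 < q := hq.one_lt
  have hp1 : 1 < p := hp.one_lt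
  have hcardQ : Nat.card Q = p * q := by rw [Nat.card_eq_fintype_card, hQ]
  -- divisors of p*q
  have hdvd : ∀ d : ℕ, d ∣ p * q → d = 1 ∨ d = p ∨ d = q ∨ d = p * q := by
    intro d hd
    by_cases hpd : p ∣ d
    · obtain ⟨e, rfl⟩ := hpd
      have he : e ∣ q := (mul_dvd_mul_iff_left (a := p) (by positivity)).mp hd
      rcases hq.eq_one_or_self_of_dvd e he with h | h
      · right; left; simp [h]
      · right; right; right; rw [h]
    · have hcop : Nat.Coprime d p := ((hp.coprime_iff_not_dvd).mpr hpd).symm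
      have hdq : d ∣ q := by
        have := Nat.Coprime.dvd_of_dvd_mul_right hcop (by rwa [mul_comm] at hd)
        exact this
      rcases hq.eq_one_or_self_of_dvd d hdq with h | h
      · left; exact h
      · right; right; left; exact h
  -- proper nontrivial subgroups have prime order
  have hKprime : ∀ K : Subgroup Q, K ≠ ⊥ → K ≠ ⊤ → (Nat.card K).Prime := by
    intro K hb ht
    have h1 : Nat.card K ∣ p * q := hcardQ ▸ Subgroup.card_subgroup_dvd_card K
    rcases hdvd _ h1 with h | h | h | h
    · exact absurd (Subgroup.card_eq_one.mp h) hb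
    · rw [h]; exact hp
    · rw [h]; exact hq
    · exact absurd (Subgroup.eq_top_of_card_eq K (h.trans hcardQ.symm)) ht
  -- Q is not cyclic: zpowers g is never ⊤
  have hnottop : ∀ g : Q, Subgroup.zpowers g ≠ ⊤ := by
    intro g hg
    apply hna
    intro a b
    obtain ⟨m, hm⟩ := Subgroup.mem_zpowers_iff.mp (hg ▸ Subgroup.mem_top a)
    obtain ⟨n, hn⟩ := Subgroup.mem_zpowers_iff.mp (hg ▸ Subgroup.mem_top b)
    rw [← hm, ← hn, ← zpow_add, ← zpow_add, add_comm]
  -- uniqueness of the proper nontrivial subgroup containing a nontrivial element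
  have huniq : ∀ (g : Q) (K : Subgroup Q), g ≠ 1 → K ≠ ⊥ → K ≠ ⊤ → g ∈ K →
      K = Subgroup.zpowers g := by
    intro g K hg hb ht hgK
    have hle : Subgroup.zpowers g ≤ K := Subgroup.zpowers_le.mpr hgK
    have hzdvd : Nat.card (Subgroup.zpowers g) ∣ Nat.card K := Subgroup.card_dvd_of_le hle
    have hzne : Nat.card (Subgroup.zpowers g) ≠ 1 := by
      rw [Nat.card_zpowers]
      simpa [orderOf_eq_one_iff] using hg
    have hcardeq : Nat.card (Subgroup.zpowers g) = Nat.card K :=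
      ((hKprime K hb ht).eq_one_or_self_of_dvd _ hzdvd).resolve_left hzne
    exact (Subgroup.eq_of_le_of_card_ge hle (le_of_eq hcardeq.symm)).symm
  haveI : Finite (Subgroup Q) :=
    Finite.of_injective (fun K : Subgroup Q => (K : Set Q)) (fun _ _ h => SetLike.coe_injective h)
  haveI := Fintype.ofFinite (Subgroup Q)
  -- the set of proper nontrivial subgroups
  set S : Finset (Subgroup Q) :=
    Finset.univ.filter (fun K : Subgroup Q => K ≠ ⊥ ∧ K ≠ ⊤) with hS
  have hmemS : ∀ K : Subgroup Q, K ∈ S ↔ (K ≠ ⊥ ∧ K ≠ ⊤) := by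
    intro K; simp [hS]
  -- zpowers of a nontrivial element is in S
  have hzS : ∀ g : Q, g ≠ 1 → Subgroup.zpowers g ∈ S := by
    intro g hg
    rw [hmemS]
    exact ⟨by simpa [Subgroup.zpowers_eq_bot] using hg, hnottop g⟩
  -- S has at least 2 elements
  have hScard : 2 ≤ S.card := by
    haveI : Fact p.Prime := ⟨hp⟩
    haveI : Fact q.Prime := ⟨hq⟩
    obtain ⟨x, hx⟩ := exists_prime_orderOf_dvd_card p (by rw [hQ]; exact dvd_mul_right p q)
    obtain ⟨y, hy⟩ := exists_prime_orderOf_dvd_card q (by rw [hQ]; exact dvd_mul_left q p)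
    have hx1 : x ≠ 1 := by
      intro h; rw [h, orderOf_one] at hx; exact absurd hx.symm hp.one_lt.ne'
    have hy1 : y ≠ 1 := by
      intro h; rw [h, orderOf_one] at hy; exact absurd hy.symm hq.one_lt.ne'
    have hxy : Subgroup.zpowers x ≠ Subgroup.zpowers y := by
      intro h
      have : orderOf x = orderOf y := by
        rw [← Nat.card_zpowers, ← Nat.card_zpowers, h]
      rw [hx, hy] at this
      exact hpq.ne this
    have : ({Subgroup.zpowers x, Subgroup.zpowers y} : Finset (Subgroup Q)) ⊆ S := by
      intro K hK
      rcases Finset.mem_insert.mp hK with h | h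
      · exact h ▸ hzS x hx1
      · exact (Finset.mem_singleton.mp h) ▸ hzS y hy1
    calc 2 = ({Subgroup.zpowers x, Subgroup.zpowers y} : Finset (Subgroup Q)).card := by
            rw [Finset.card_insert_of_notMem (by simpa using hxy), Finset.card_singleton]
      _ ≤ S.card := Finset.card_le_card this
  -- the "norm" sums
  set T : Subgroup Q → Finset Q := fun K => Finset.univ.filter (· ∈ K) with hT
  set σ : Subgroup Q → A → A := fun K a => ∑ g ∈ T K, g • a with hσdef
  have hσ : ∀ (K : Subgroup Q) (a : A), σ K a ∈ fixedAddSubgroup Q A K := by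
    intro K a k hk
    show k • ∑ g ∈ T K, g • a = ∑ g ∈ T K, g • a
    rw [Finset.smul_sum]
    simp_rw [smul_smul]
    have hmap : (T K).map (Equiv.mulLeft k).toEmbedding = T K := by
      ext g
      simp only [Finset.mem_map, Equiv.coe_toEmbedding, Equiv.coe_mulLeft, hT,
        Finset.mem_filter, Finset.mem_univ, true_and]
      constructor
      · rintro ⟨h, hh, rfl⟩; exact K.mul_mem hk hh
      · intro hgK; exact ⟨k⁻¹ * g, K.mul_mem (K.inv_mem hk) hgK, by group⟩
    calc ∑ g ∈ T K, (k * g) • a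
        = ∑ g ∈ (T K).map (Equiv.mulLeft k).toEmbedding, g • a := by
          rw [Finset.sum_map]; rfl
      _ = ∑ g ∈ T K, g • a := by rw [hmap]
  -- σ ⊤ is the full sum
  have hTtop : T ⊤ = Finset.univ := by
    ext g; simp [hT]
  -- the counting identity
  have key : ∀ a : A, (S.card - 1) • a = (∑ K ∈ S, σ K a) - σ ⊤ a := by
    intro a
    have hswap : ∑ K ∈ S, σ K a
        = ∑ g ∈ Finset.univ, (S.filter (fun K => g ∈ K)).card • (g • a) := by
      calc ∑ K ∈ S, σ K a
          = ∑ K ∈ S, ∑ g ∈ Finset.univ, (if g ∈ K then g • a else 0) := by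
            refine Finset.sum_congr rfl fun K _ => ?_
            rw [hσdef]
            simp only [hT]
            rw [Finset.sum_filter]
        _ = ∑ g ∈ Finset.univ, ∑ K ∈ S, (if g ∈ K then g • a else 0) := Finset.sum_comm
        _ = ∑ g ∈ Finset.univ, (S.filter (fun K => g ∈ K)).card • (g • a) := by
            refine Finset.sum_congr rfl fun g _ => ?_
            rw [← Finset.sum_filter, Finset.sum_const]
    have hfilt : ∀ g : Q, g ≠ 1 → (S.filter (fun K => g ∈ K)) = {Subgroup.zpowers g} := by
      intro g hg
      ext K
      simp only [Finset.mem_filter, Finset.mem_singleton]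
      constructor
      · rintro ⟨hKS, hgK⟩
        obtain ⟨hb, ht⟩ := (hmemS K).mp hKS
        exact huniq g K hg hb ht hgK
      · rintro rfl
        exact ⟨hzS g hg, Subgroup.mem_zpowers g⟩
    have hfilt1 : (S.filter (fun K => (1 : Q) ∈ K)) = S := by
      apply Finset.filter_true_of_mem
      intro K _; exact K.one_mem
    rw [hswap]
    rw [← Finset.add_sum_erase _ _ (Finset.mem_univ (1 : Q))]
    have hrest : ∑ g ∈ Finset.univ.erase (1 : Q), (S.filter (fun K => g ∈ K)).card • (g • a)
        = ∑ g ∈ Finset.univ.erase (1 : Q), g • a := by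
      refine Finset.sum_congr rfl fun g hg => ?_
      rw [hfilt g (Finset.ne_of_mem_erase hg), Finset.card_singleton, one_smul]
    rw [hrest, hfilt1, one_smul]
    have hσtop : σ ⊤ a = a + ∑ g ∈ Finset.univ.erase (1 : Q), g • a := by
      rw [hσdef]
      simp only [hTtop]
      rw [← Finset.add_sum_erase _ _ (Finset.mem_univ (1 : Q)), one_smul]
    rw [hσtop]
    have h1 : 1 ≤ S.card := le_trans (by norm_num) hScard
    have : S.card • a = (S.card - 1) • a + a := by
      conv_lhs => rw [← Nat.succ_pred_eq_of_pos (lt_of_lt_of_le Nat.zero_lt_one h1)]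
      rw [succ_nsmul]
      rfl
    rw [this]
    abel
  -- the big finitely generated submodule
  set M : Subgroup Q → Submodule ℤ A := fun K => AddSubgroup.toIntSubmodule (fixedAddSubgroup Q A K)
    with hM
  have hMfg : ∀ K : Subgroup Q, K ≠ ⊥ → (M K).FG := by
    intro K hK
    rw [hM, Submodule.fg_iff_addSubgroup_fg, AddSubgroup.toIntSubmodule_toAddSubgroup]
    exact hfix K hK
  have htopbot : (⊤ : Subgroup Q) ≠ ⊥ := by
    haveI : Nontrivial Q := Fintype.one_lt_card_iff_nontrivial.mp
      (by rw [hQ]; exact one_lt_mul'' hp1 hq1)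
    obtain ⟨g, hg⟩ := exists_ne (1 : Q)
    intro h
    exact hg (Subgroup.mem_bot.mp (h ▸ Subgroup.mem_top g))
  set B : Submodule ℤ A := S.sup M ⊔ M ⊤ with hB
  have hBfg : B.FG := by
    apply Submodule.FG.sup
    · exact Submodule.fg_finset_sup S M (fun K hK => hMfg K ((hmemS K).mp hK).1)
    · exact hMfg ⊤ htopbot
  set n : ℕ := S.card - 1 with hn
  have hnpos : 0 < n := by omega
  have hmemB : ∀ a : A, n • a ∈ B := by
    intro a
    rw [hn, key a]
    apply sub_mem
    · apply Submodule.sum_mem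
      intro K hK
      exact Submodule.mem_sup_left ((Finset.le_sup (f := M) hK) (hσ K a))
    · exact Submodule.mem_sup_right (hσ ⊤ a)
  -- A embeds into B, which is Noetherian
  have hmemB' : ∀ a : A, ((n : ℤ) • LinearMap.id (R := ℤ) (M := A)) a ∈ B := by
    intro a
    simpa [natCast_zsmul] using hmemB a
  set φ : A →ₗ[ℤ] B := LinearMap.codRestrict B ((n : ℤ) • LinearMap.id) hmemB' with hφ
  have hφinj : Function.Injective φ := by
    intro a b hab
    have h1 : (n : ℤ) • a = (n : ℤ) • b := by
      have := congrArg (Subtype.val) hab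
      simpa [hφ, LinearMap.codRestrict] using this
    have h2 : n • (a - b) = 0 := by
      have : (n : ℤ) • (a - b) = 0 := by rw [smul_sub, h1, sub_self]
      rwa [natCast_zsmul] at this
    exact sub_eq_zero.mp (htf (a - b) n hnpos h2)
  haveI : IsNoetherian ℤ B := isNoetherian_of_fg_of_noetherian B hBfg
  haveI : IsNoetherian ℤ A := isNoetherian_of_injective φ hφinj
  haveI : Module.Finite ℤ A := inferInstance
  exact Module.Finite.iff_addGroup_fg.mp inferInstance
end

section
/- The class of upper-finite groups is closed under extensions: if N is a normal subgroup of G such that both N and G/N are upper-finite, then G is upper-finite. -/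
/-- A group is upper-finite if every finitely generated quotient of it is finite. -/
def UpperFinite (G : Type*) [Group G] : Prop :=
  ∀ (N : Subgroup G) [N.Normal], Group.FG (G ⧸ N) → Finite (G ⧸ N)

/-- the class of upper-finite groups is closed under extensions. -/
theorem stmt_7 {G : Type} [Group G] (N : Subgroup G) [N.Normal]
    (hN : UpperFinite N) (hQ : UpperFinite (G ⧸ N)) : UpperFinite G := by
  intro K _ hFG
  set π : G →* G ⧸ K := QuotientGroup.mk' K with hπ
  have hπs : Function.Surjective π := QuotientGroup.mk'_surjective K
  -- M = image of N in G/K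
  set M : Subgroup (G ⧸ K) := N.map π with hM
  haveI : M.Normal := Subgroup.Normal.map ‹N.Normal› π hπs
  -- M' = image of K in G/N
  set ρ : G →* G ⧸ N := QuotientGroup.mk' N with hρ
  have hρs : Function.Surjective ρ := QuotientGroup.mk'_surjective N
  set M' : Subgroup (G ⧸ N) := K.map ρ with hM'
  haveI : M'.Normal := Subgroup.Normal.map ‹K.Normal› ρ hρs
  -- surjection from G/K onto (G/N)/M', giving FG of the target
  have hker1 : K ≤ ((QuotientGroup.mk' M').comp ρ).ker := by
    intro k hk
    simp only [MonoidHom.mem_ker, MonoidHom.comp_apply]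
    rw [QuotientGroup.mk'_apply, QuotientGroup.eq_one_iff]
    exact Subgroup.mem_map_of_mem ρ hk
  have hφs : Function.Surjective (QuotientGroup.lift K ((QuotientGroup.mk' M').comp ρ) hker1) := by
    intro x
    obtain ⟨g, rfl⟩ := (QuotientGroup.mk'_surjective M').comp hρs x
    exact ⟨π g, rfl⟩
  haveI hFG' : Group.FG ((G ⧸ N) ⧸ M') := @Group.fg_of_surjective _ _ _ _ hFG _ hφs
  have hfin' : Finite ((G ⧸ N) ⧸ M') := hQ M' hFG'
  -- surjection from (G/N)/M' onto (G/K)/M, giving finiteness of (G/K)/M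
  have hker2 : N ≤ ((QuotientGroup.mk' M).comp π).ker := by
    intro n hn
    simp only [MonoidHom.mem_ker, MonoidHom.comp_apply]
    rw [QuotientGroup.mk'_apply, QuotientGroup.eq_one_iff]
    exact Subgroup.mem_map_of_mem π hn
  have hker3 : M' ≤ (QuotientGroup.lift N ((QuotientGroup.mk' M).comp π) hker2).ker := by
    rintro x ⟨k, hk, rfl⟩
    simp only [MonoidHom.mem_ker]
    show QuotientGroup.mk' M (π k) = 1
    rw [QuotientGroup.mk'_apply, QuotientGroup.eq_one_iff]
    have h1 : π k = 1 := by
      rw [hπ, QuotientGroup.mk'_apply, QuotientGroup.eq_one_iff]; exact hk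
    rw [h1]; exact M.one_mem
  set ψ := QuotientGroup.lift M' (QuotientGroup.lift N ((QuotientGroup.mk' M).comp π) hker2) hker3
  have hψs : Function.Surjective ψ := by
    intro x
    obtain ⟨g, rfl⟩ := (QuotientGroup.mk'_surjective M).comp hπs x
    exact ⟨QuotientGroup.mk' M' (ρ g), rfl⟩
  haveI hfinQM : Finite ((G ⧸ K) ⧸ M) := Finite.of_surjective ψ hψs
  -- M has finite index, hence is finitely generated (Schreier)
  haveI : M.FiniteIndex := Subgroup.finiteIndex_of_finite_quotient
  haveI : Group.FG (G ⧸ K) := hFG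
  haveI hMfg : Group.FG M := Subgroup.fg_of_index_ne_zero M
  -- M is a quotient of N
  set f : N →* M := (π.comp N.subtype).codRestrict M
    (fun n => Subgroup.mem_map_of_mem π n.2) with hf
  have hfs : Function.Surjective f := by
    rintro ⟨x, n, hn, rfl⟩
    exact ⟨⟨n, hn⟩, Subtype.ext rfl⟩
  haveI : f.ker.Normal := inferInstance
  have e : (N ⧸ f.ker) ≃* M := QuotientGroup.quotientKerEquivOfSurjective f hfs
  have hfgq : Group.FG (N ⧸ f.ker) := by
    have : Group.FG M := hMfg
    exact Group.fg_of_surjective (f := e.symm.toMonoidHom) e.symm.surjective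
  haveI hqfin : Finite (N ⧸ f.ker) := hN f.ker hfgq
  haveI hMfin : Finite M := Finite.of_equiv _ e.toEquiv
  -- conclude: G/K finite from M and (G/K)/M finite
  exact Finite.of_equiv _ (Subgroup.groupEquivQuotientProdSubgroup (s := M)).symm
end

section
/- Let A and B be abelian groups. If A is upper-finite, then the tensor product A ⊗_ℤ B is upper-finite. -/
open scoped TensorProduct

/-- An abelian group is upper-finite if every finitely generated quotient of it is finite. -/
def AddUpperFinite (A : Type*) [AddCommGroup A] : Prop :=
  ∀ N : AddSubgroup A, AddGroup.FG (A ⧸ N) → Finite (A ⧸ N)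

lemma uf_of_surjective {A C : Type*} [AddCommGroup A] [AddCommGroup C]
    (hA : AddUpperFinite A) (f : A →+ C) (hf : Function.Surjective f) :
    AddUpperFinite C := by
  intro N hfg
  set g : A →+ C ⧸ N := (QuotientAddGroup.mk' N).comp f with hg
  have hgs : Function.Surjective g := (QuotientAddGroup.mk'_surjective N).comp hf
  have e := QuotientAddGroup.quotientKerEquivOfSurjective g hgs
  have hfg' : AddGroup.FG (A ⧸ g.ker) :=
    AddGroup.fg_of_surjective (f := e.symm.toAddMonoidHom) e.symm.surjective
  have := hA g.ker hfg'
  exact Finite.of_equiv _ e.toEquiv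

/-- abelian group fg + upper-finite implies finite -/
lemma finite_of_uf_fg {A : Type*} [AddCommGroup A] (hA : AddUpperFinite A)
    (hfg : AddGroup.FG A) : Finite A := by
  have e := QuotientAddGroup.quotientBot (G := A)
  have : AddGroup.FG (A ⧸ (⊥ : AddSubgroup A)) :=
    AddGroup.fg_of_surjective (f := e.symm.toAddMonoidHom) e.symm.surjective
  have := hA ⊥ this
  exact Finite.of_equiv _ e.toEquiv

lemma fg_subgroup_of_fg {Q : Type*} [AddCommGroup Q] (hfg : AddGroup.FG Q)
    (K : AddSubgroup Q) : AddGroup.FG K := by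
  have : Module.Finite ℤ Q := Module.Finite.iff_addGroup_fg.mpr hfg
  have : IsNoetherian ℤ Q := isNoetherian_of_isNoetherianRing_of_finite ℤ Q
  have hK : (AddSubgroup.toIntSubmodule K).FG := IsNoetherian.noetherian _
  have : Module.Finite ℤ (AddSubgroup.toIntSubmodule K) := Module.Finite.iff_fg.mpr hK
  exact Module.Finite.iff_addGroup_fg.mp this

lemma key {ι : Type*} (s : Finset ι) :
    ∀ (Q : Type) (_ : AddCommGroup Q) (H : ι → AddSubgroup Q),
    AddGroup.FG Q → (∀ i ∈ s, AddUpperFinite (H i)) → (⨆ i ∈ s, H i) = ⊤ → Finite Q := by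
  classical
  induction s using Finset.induction_on with
  | empty =>
    intro Q _ H _ _ htop
    simp only [Finset.notMem_empty, iSup_false, iSup_bot] at htop
    have : Subsingleton Q := by
      constructor
      intro a b
      have ha : a ∈ (⊤ : AddSubgroup Q) := trivial
      have hb : b ∈ (⊤ : AddSubgroup Q) := trivial
      rw [← htop] at ha hb
      simp [AddSubgroup.mem_bot] at ha hb
      rw [ha, hb]
    exact Finite.of_subsingleton
  | @insert i t hit ih =>
    intro Q _ H hfg hUF htop
    set K := H i with hK
    have hKfg : AddGroup.FG K := fg_subgroup_of_fg hfg K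
    have hKfin : Finite K := finite_of_uf_fg (hUF i (Finset.mem_insert_self i t)) hKfg
    set f := QuotientAddGroup.mk' K with hf
    have hfsurj : Function.Surjective f := QuotientAddGroup.mk'_surjective K
    have hQKfg : AddGroup.FG (Q ⧸ K) := AddGroup.fg_of_surjective (f := f) hfsurj
    have hmaptop : (⨆ j ∈ t, (H j).map f) = ⊤ := by
      have h1 : (⨆ j ∈ insert i t, H j).map f = (⊤ : AddSubgroup Q).map f := by rw [htop]
      rw [AddSubgroup.map_top_of_surjective f hfsurj] at h1
      rw [Finset.iSup_insert] at h1
      rw [AddSubgroup.map_sup] at h1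
      have hKbot : K.map f = ⊥ := by
        rw [eq_bot_iff]
        intro x hx
        obtain ⟨y, hy, rfl⟩ := hx
        rw [AddSubgroup.mem_bot]; exact (QuotientAddGroup.eq_zero_iff y).mpr hy
      rw [hKbot, bot_sup_eq] at h1
      rw [← h1]
      simp only [AddSubgroup.map_iSup]
    have hfin : Finite (Q ⧸ K) := by
      refine ih (Q ⧸ K) _ (fun j => (H j).map f) hQKfg ?_ hmaptop
      intro j hj
      exact uf_of_surjective (hUF j (Finset.mem_insert_of_mem hj))
        (f.addSubgroupMap (H j)) (f.addSubgroupMap_surjective (H j))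
    have e := AddSubgroup.addGroupEquivQuotientProdAddSubgroup (s := K)
    exact Finite.of_equiv _ e.symm

/-- if `A` is an upper-finite abelian group, then `A ⊗ℤ B` is upper-finite. -/
theorem stmt_8 (A B : Type) [AddCommGroup A] [AddCommGroup B] (hA : AddUpperFinite A) :
    AddUpperFinite (A ⊗[ℤ] B) := by
  intro N hfg
  set Q := (A ⊗[ℤ] B) ⧸ N with hQ
  set φ : B → (A →+ Q) := fun b =>
    (QuotientAddGroup.mk' N).comp ((TensorProduct.mk ℤ A B).flip b).toAddMonoidHom with hφ
  set H : B → AddSubgroup Q := fun b => (φ b).range with hH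
  have htop : (⨆ b : B, H b) = ⊤ := by
    rw [eq_top_iff]
    have hmem : ∀ x : A ⊗[ℤ] B, QuotientAddGroup.mk' N x ∈ ⨆ b : B, H b := by
      intro x
      induction x using TensorProduct.induction_on with
      | zero => simpa using AddSubgroup.zero_mem _
      | tmul a b => exact AddSubgroup.mem_iSup_of_mem b ⟨a, rfl⟩
      | add x y hx hy =>
        rw [map_add]
        exact AddSubgroup.add_mem _ hx hy
    intro q _
    obtain ⟨x, rfl⟩ := QuotientAddGroup.mk'_surjective N q
    exact hmem x
  -- compactness: extract a finite subfamily
  have hmod : Module.Finite ℤ Q := Module.Finite.iff_addGroup_fg.mpr hfg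
  have hcompact : IsCompactElement (⊤ : Submodule ℤ Q) :=
    (Submodule.fg_iff_compact _).mp (Module.finite_def.mp hmod)
  have hle : (⊤ : Submodule ℤ Q) ≤ ⨆ b : B, AddSubgroup.toIntSubmodule (H b) := by
    rw [← AddSubgroup.toIntSubmodule.map_iSup, htop]
    simp
  obtain ⟨s, hs⟩ := CompleteLattice.IsCompactElement.exists_finset_of_le_iSup _ hcompact _ hle
  have hstop : (⨆ b ∈ s, H b) = ⊤ := by
    rw [eq_top_iff]
    have := AddSubgroup.toIntSubmodule.symm.monotone hs
    simp only [AddSubgroup.toIntSubmodule.symm.map_iSup] at this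
    simpa using this
  exact key s Q _ H hfg
    (fun b _ => uf_of_surjective hA (φ b).rangeRestrict (φ b).rangeRestrict_surjective)
    hstop
end

section
/- An abelian group that is the (internal) sum of a family of upper-finite subgroups is itself upper-finite. -/
/-- an abelian group that is the sum of a family of upper-finite subgroups
is itself upper-finite. -/
theorem stmt_9 (A : Type) [AddCommGroup A] {ι : Type} (s : ι → AddSubgroup A)
    (hsum : (⨆ i, s i) = ⊤) (hup : ∀ i, AddUpperFinite (s i)) :
    AddUpperFinite A := by
  intro N hFG
  haveI := hFG
  haveI : Module.Finite ℤ (A ⧸ N) := Module.Finite.iff_addGroup_fg.mpr hFG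
  haveI : IsNoetherian ℤ (A ⧸ N) := inferInstance
  refine AddCommGroup.finite_of_fg_torsion (A ⧸ N) ?_
  -- every element of the image of each s i is torsion
  have htor : ∀ i, ∀ x ∈ (s i).map (QuotientAddGroup.mk' N), IsOfFinAddOrder x := by
    intro i
    set f : (s i) →+ (A ⧸ N) := (QuotientAddGroup.mk' N).comp (s i).subtype with hf
    have hrange : (s i).map (QuotientAddGroup.mk' N) = f.range := by
      ext x
      simp only [hf, AddMonoidHom.mem_range, AddSubgroup.mem_map,
        AddMonoidHom.coe_comp, Function.comp_apply, AddSubgroup.coe_subtype]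
      constructor
      · rintro ⟨y, hy, h⟩; exact ⟨⟨y, hy⟩, h⟩
      · rintro ⟨⟨y, hy⟩, h⟩; exact ⟨y, hy, h⟩
    rw [hrange]
    -- f.range is a subgroup of a Noetherian ℤ-module, hence f.g.
    have hfgr : AddGroup.FG f.range := by
      have h1 : (AddSubgroup.toIntSubmodule f.range).FG := IsNoetherian.noetherian _
      rw [AddGroup.fg_iff_addSubgroup_fg, AddSubgroup.fg_iff_addSubmonoid_fg]
      rw [Submodule.fg_iff_addSubgroup_fg] at h1
      exact (AddSubgroup.fg_iff_addSubmonoid_fg _).mp h1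
    have e := QuotientAddGroup.quotientKerEquivRange f
    have hker : AddGroup.FG ((s i) ⧸ f.ker) := by
      rw [AddGroup.fg_iff_addMonoid_fg] at hfgr ⊢
      exact AddMonoid.fg_of_surjective e.symm.toAddMonoidHom e.symm.surjective
    have hfin : Finite ((s i) ⧸ f.ker) := hup i f.ker hker
    haveI : Finite f.range := Finite.of_equiv _ e.toEquiv
    intro x hx
    have h := @isOfFinAddOrder_of_finite f.range _ _ ⟨x, hx⟩
    exact AddSubmonoid.isOfFinAddOrder_coe.2 h
  -- conclude: every element of A ⧸ N is torsion
  intro x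
  have hxtop : x ∈ (⊤ : AddSubgroup (A ⧸ N)) := trivial
  have hmap : AddSubgroup.map (QuotientAddGroup.mk' N) ⊤ = ⊤ :=
    AddSubgroup.map_top_of_surjective _ (QuotientAddGroup.mk'_surjective N)
  rw [← hmap, ← hsum, AddSubgroup.map_iSup] at hxtop
  refine AddSubgroup.iSup_induction (x := x)
    (fun i => (s i).map (QuotientAddGroup.mk' N)) hxtop
    (fun i y hy => htor i y hy) ?_ ?_
  · exact IsOfFinAddOrder.zero
  · exact fun a b ha hb => ha.add hb
end

section
/- Let G be a nilpotent group. For each i ≥ 1 there is a surjective group homomorphism from the i-fold tensor power (G/G') ⊗ ⋯ ⊗ (G/G') (over ℤ) onto the lower central factor γ_i(G)/γ_{i+1}(G), induced by iterated commutators. -/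
namespace Stmt10Aux

open scoped commutatorElement

variable (G : Type) [Group G]

local notation "L" => Subgroup.lowerCentralSeries (⊤ : Subgroup G)

abbrev Q (n : ℕ) : Type :=
  ↥(L n) ⧸ (L (n+1)).subgroupOf (L n)

variable {G}

theorem comm_mem {n : ℕ} {a : G} (ha : a ∈ L n) (x : G) : ⁅a, x⁆ ∈ L (n+1) :=
  Subgroup.commutator_mem_commutator ha (Subgroup.mem_top x)

variable (G)

/-- the class of `g` in `Q n` -/
def mkQ (n : ℕ) (g : G) (hg : g ∈ L n) : Q G n :=
  QuotientGroup.mk ⟨g, hg⟩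

variable {G}

theorem mkQ_mul (n : ℕ) (g g' : G) (hg : g ∈ L n) (hg' : g' ∈ L n) :
    mkQ G n (g * g') (mul_mem hg hg') = mkQ G n g hg * mkQ G n g' hg' := rfl

theorem mkQ_eq_of (n : ℕ) {g g' : G} (hg : g ∈ L n) (hg' : g' ∈ L n)
    (h : g⁻¹ * g' ∈ L (n+1)) : mkQ G n g hg = mkQ G n g' hg' := by
  refine (QuotientGroup.eq).mpr ?_
  simpa [Subgroup.mem_subgroupOf] using h

instance Qcomm (n : ℕ) : CommGroup (Q G n) :=
  { (inferInstance : Group (Q G n)) with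
    mul_comm := by
      intro a b
      induction a using QuotientGroup.induction_on with
      | H x =>
      induction b using QuotientGroup.induction_on with
      | H y =>
      show mkQ G n _ _ * mkQ G n _ _ = mkQ G n _ _ * mkQ G n _ _
      rw [← mkQ_mul, ← mkQ_mul]
      refine mkQ_eq_of n _ _ ?_
      have : ((x:G) * y)⁻¹ * (y * x) = ⁅(y:G)⁻¹, (x:G)⁻¹⁆ := by group
      rw [this]
      exact comm_mem (inv_mem y.2) _ }

variable (G)

/-- the inner commutator homomorphism `G →* Q (n+1)` for fixed `a ∈ L n`. -/
def inner (n : ℕ) (a : ↥(L n)) : G →* Q G (n+1) :=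
  MonoidHom.mk' (fun x => mkQ G (n+1) ⁅(a : G), x⁆ (comm_mem a.2 x)) (by
    intro x y
    rw [← mkQ_mul]
    refine mkQ_eq_of (n+1) _ _ ?_
    have key : ⁅(a:G), x * y⁆⁻¹ * (⁅(a:G), x⁆ * ⁅(a:G), y⁆) = ⁅⁅(a:G), y⁆⁻¹, x⁆⁻¹ := by group
    rw [key]
    exact inv_mem (comm_mem (inv_mem (comm_mem a.2 y)) x))

/-- lift to the abelianization in the second variable -/
def innerAb (n : ℕ) (a : ↥(L n)) : Abelianization G →* Q G (n+1) :=
  Abelianization.lift (inner G n a)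

theorem innerAb_mul (n : ℕ) (a b : ↥(L n)) :
    innerAb G n (a * b) = innerAb G n a * innerAb G n b := by
  refine Abelianization.hom_ext _ _ (MonoidHom.ext fun x => ?_)
  show inner G n (a*b) x = inner G n a x * inner G n b x
  unfold inner
  simp only [MonoidHom.mk'_apply]
  rw [mul_comm (mkQ G (n+1) ⁅(a:G), x⁆ _), ← mkQ_mul]
  refine mkQ_eq_of (n+1) _ _ ?_
  have hco : ((a * b : ↥(L n)) : G) = (a : G) * (b : G) := rfl
  rw [hco]
  have key : ⁅(a:G) * (b:G), x⁆⁻¹ * (⁅(b:G), x⁆ * ⁅(a:G), x⁆) =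
      ⁅(a:G), x⁆⁻¹ * ⁅⁅(b:G), x⁆⁻¹, (a:G)⁆⁻¹ * ⁅(a:G), x⁆⁻¹⁻¹ := by group
  rw [key]
  exact (Subgroup.lowerCentralSeries_normal ⊤ (n+2)).conj_mem _
    (inv_mem (comm_mem (inv_mem (comm_mem b.2 x)) _)) _

/-- the bilinear commutator map `Q n →* (Abelianization G →* Q (n+1))`. -/
def B (n : ℕ) : Q G n →* (Abelianization G →* Q G (n+1)) :=
  QuotientGroup.lift _ (MonoidHom.mk' (innerAb G n) (innerAb_mul G n)) (by
    intro a ha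
    rw [Subgroup.mem_subgroupOf] at ha
    refine Abelianization.hom_ext _ _ (MonoidHom.ext fun x => ?_)
    show inner G n a x = 1
    refine (QuotientGroup.eq_one_iff _).mpr ?_
    simpa [Subgroup.mem_subgroupOf, -Subgroup.lowerCentralSeries_succ] using comm_mem ha x)

theorem B_mkQ (n : ℕ) (a : G) (ha : a ∈ L n) (x : G) :
    B G n (mkQ G n a ha) (Abelianization.of x) = mkQ G (n+1) ⁅a, x⁆ (comm_mem ha x) := rfl

/-- the base map `Abelianization G →* Q 0`. -/
def e : Abelianization G →* Q G 0 :=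
  Abelianization.lift (MonoidHom.mk' (fun x => mkQ G 0 x (Subgroup.mem_top x))
    (fun _ _ => rfl))

/-- the iterated-commutator map. -/
def F : ∀ k : ℕ, (Fin (k+1) → Abelianization G) → Q G k
  | 0, v => e G (v 0)
  | (k+1), v => B G k (F k (v ∘ Fin.castSucc)) (v (Fin.last (k+1)))

theorem F_update_mul : ∀ (k : ℕ) [DecidableEq (Fin (k+1))] (v : Fin (k+1) → Abelianization G) (j : Fin (k+1))
    (x y : Abelianization G),
    F G k (Function.update v j (x*y)) =
      F G k (Function.update v j x) * F G k (Function.update v j y)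
  | 0, _, v, j, x, y => by
    have hj : j = 0 := Fin.eq_zero j
    subst hj
    show e G _ = e G _ * e G _
    simp [map_mul]
  | (k+1), _, v, j, x, y => by
    rcases eq_or_ne j (Fin.last (k+1)) with rfl | hj
    · show B G k _ _ = B G k _ _ * B G k _ _
      have hc : ∀ z, Function.update v (Fin.last (k+1)) z ∘ Fin.castSucc = v ∘ Fin.castSucc := by
        intro z; funext i
        simp [Function.update_apply, (Fin.castSucc_lt_last i).ne]
      rw [hc, hc, hc]
      simp [Function.update_self, map_mul]
    · obtain ⟨j', rfl⟩ := Fin.eq_castSucc_of_ne_last hj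
      show B G k _ _ = B G k _ _ * B G k _ _
      have hc : ∀ z, Function.update v j'.castSucc z ∘ Fin.castSucc =
          Function.update (v ∘ Fin.castSucc) j' z := by
        intro z; funext i
        simp [Function.update_apply, Function.comp, Fin.castSucc_inj]
      have hl : ∀ z, Function.update v j'.castSucc z (Fin.last (k+1)) = v (Fin.last (k+1)) := by
        intro z
        exact Function.update_of_ne (Fin.castSucc_lt_last j').ne' _ _
      rw [hc, hc, hc, hl, hl, hl, F_update_mul k _ j' x y, map_mul, MonoidHom.mul_apply]


theorem F_closure : ∀ k : ℕ, Subgroup.closure (Set.range (F G k)) = (⊤ : Subgroup (Q G k))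
  | 0 => by
    rw [eq_top_iff]
    rintro q -
    induction q using QuotientGroup.induction_on with
    | H x =>
    refine Subgroup.subset_closure ⟨fun _ => Abelianization.of (x : G), ?_⟩
    show e G (Abelianization.of (x : G)) = _
    show mkQ G 0 (x : G) _ = _
    rfl
  | (k+1) => by
    rw [eq_top_iff]
    rintro q -
    induction q using QuotientGroup.induction_on with
    | H a =>
    obtain ⟨g, hg⟩ := a
    -- `g ∈ L (k+1)`, induct on the closure description
    rw [Subgroup.lowerCentralSeries_succ] at hg
    refine Subgroup.closure_induction (k := { x | ∃ p ∈ L k, ∃ q ∈ (⊤ : Subgroup G),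
        p * q * p⁻¹ * q⁻¹ = x })
      (p := fun x hx => (QuotientGroup.mk
        (⟨x, by rw [Subgroup.lowerCentralSeries_succ]; exact hx⟩ : ↥(L (k+1))) : Q G (k+1)) ∈
        Subgroup.closure (Set.range (F G (k+1))))
      ?_ ?_ ?_ ?_ hg
    · rintro x ⟨p, hp, q, -, rfl⟩
      have hx : p * q * p⁻¹ * q⁻¹ = ⁅p, q⁆ := rfl
      have hmk : (QuotientGroup.mk (⟨p * q * p⁻¹ * q⁻¹, _⟩ : ↥(L (k+1))) : Q G (k+1)) =
          B G k (mkQ G k p hp) (Abelianization.of q) := rfl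
      rw [hmk]
      have hp' : mkQ G k p hp ∈ Subgroup.closure (Set.range (F G k)) := by
        rw [F_closure k]; trivial
      have : B G k (mkQ G k p hp) (Abelianization.of q) ∈
          Subgroup.map ((B G k).flip (Abelianization.of q)) (Subgroup.closure (Set.range (F G k))) :=
        Subgroup.mem_map_of_mem _ hp'
      rw [MonoidHom.map_closure] at this
      refine Subgroup.closure_mono ?_ this
      rintro _ ⟨_, ⟨v, rfl⟩, rfl⟩
      refine ⟨Fin.snoc v (Abelianization.of q), ?_⟩
      show B G k (F G k (Fin.snoc v (Abelianization.of q) ∘ Fin.castSucc)) _ = _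
      have hsc : (Fin.snoc v (Abelianization.of q) ∘ Fin.castSucc) = v :=
        funext fun i => Fin.snoc_castSucc _ _ _
      rw [Fin.snoc_last, hsc, MonoidHom.flip_apply]
    · exact Subgroup.one_mem _
    · intro x y hx hy px py
      exact Subgroup.mul_mem _ px py
    · intro x hx px
      exact Subgroup.inv_mem _ px

/-- the multilinear map induced by iterated commutators. -/
def mlin (k : ℕ) : MultilinearMap ℤ (fun _ : Fin (k+1) => Additive (Abelianization G))
    (Additive (Q G k)) where
  toFun v := Additive.ofMul (F G k (fun j => Additive.toMul (v j)))
  map_update_add' {_} v j x y := by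
    have hc : ∀ z : Additive (Abelianization G),
        (fun i => Additive.toMul (Function.update v j z i)) =
          Function.update (fun i => Additive.toMul (v i)) j (Additive.toMul z) := by
      intro z; funext i
      by_cases h : i = j
      · subst h; simp
      · simp [Function.update_of_ne h]
    simp only [hc]
    rw [toMul_add, F_update_mul]
    rfl
  map_update_smul' {_} v j z x := by
    let g : Additive (Abelianization G) →+ Additive (Q G k) :=
      AddMonoidHom.mk' (fun w => Additive.ofMul (F G k
        (fun i => Additive.toMul (Function.update v j w i)))) (by
        intro w₁ w₂
        have hc : ∀ z : Additive (Abelianization G),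
            (fun i => Additive.toMul (Function.update v j z i)) =
              Function.update (fun i => Additive.toMul (v i)) j (Additive.toMul z) := by
          intro z; funext i
          by_cases h : i = j
          · subst h; simp
          · simp [Function.update_of_ne h]
        simp only [hc]
        rw [toMul_add, F_update_mul]
        rfl)
    exact map_zsmul g z x

end Stmt10Aux

/-- for a nilpotent group `G` and `i ≥ 1` there is a surjective homomorphism
from the `i`-fold tensor power of `G/G'` onto `γ_i(G)/γ_{i+1}(G)`.
(Here `γ_i(G) = lowerCentralSeries G (i-1)`, matching the paper's indexing `γ_1(G) = G`.) -/
theorem stmt_10 (G : Type) [Group G] (hG : Group.IsNilpotent G) (i : ℕ) (hi : 1 ≤ i) :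
    ∃ φ : TensorPower ℤ i (Additive (Abelianization G)) →+
      Additive (↥((⊤ : Subgroup G).lowerCentralSeries (i - 1)) ⧸
        ((⊤ : Subgroup G).lowerCentralSeries i).subgroupOf ((⊤ : Subgroup G).lowerCentralSeries (i - 1))),
      Function.Surjective φ := by
  obtain ⟨n, rfl⟩ : ∃ n, i = n + 1 := ⟨i - 1, by omega⟩
  refine ⟨(PiTensorProduct.lift (Stmt10Aux.mlin G n)).toAddMonoidHom, ?_⟩
  intro y
  have hy : Additive.toMul y ∈ Subgroup.closure (Set.range (Stmt10Aux.F G n)) := by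
    rw [Stmt10Aux.F_closure G n]; trivial
  have key : ∀ q ∈ Subgroup.closure (Set.range (Stmt10Aux.F G n)),
      ∃ x, (PiTensorProduct.lift (Stmt10Aux.mlin G n)) x = Additive.ofMul q := by
    intro q hq
    refine Subgroup.closure_induction ?_ ?_ ?_ ?_ hq
    · rintro _ ⟨v, rfl⟩
      refine ⟨PiTensorProduct.tprod ℤ (fun j => Additive.ofMul (v j)), ?_⟩
      rw [PiTensorProduct.lift.tprod]
      rfl
    · exact ⟨0, by rw [map_zero]; rfl⟩
    · rintro a b - - ⟨x₁, hx₁⟩ ⟨x₂, hx₂⟩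
      exact ⟨x₁ + x₂, by rw [map_add, hx₁, hx₂]; rfl⟩
    · rintro a - ⟨x, hx⟩
      exact ⟨-x, by rw [map_neg, hx]; rfl⟩
  obtain ⟨x, hx⟩ := key _ hy
  exact ⟨x, hx⟩
end

section
/- Let G be an upper-finite nilpotent group. Then its derived subgroup G' is also upper-finite. -/
open DirectSum
open scoped commutatorElement

/-- An upper-finite group admits no nontrivial homomorphism to ℤ. -/
lemma homZ_of_upperFinite {G : Type*} [Group G] (hG : UpperFinite G)
    (f : G →* Multiplicative ℤ) : f = 1 := by
  by_contra hf
  obtain ⟨g₀, hg₀⟩ : ∃ g, f g ≠ 1 := by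
    by_contra h
    push_neg at h
    exact hf (MonoidHom.ext fun g => h g)
  have hFGr : Group.FG ↥f.range := by
    obtain ⟨g, hg⟩ := IsCyclic.exists_generator (α := ↥f.range)
    refine ⟨⟨{g}, ?_⟩⟩
    rw [Finset.coe_singleton, ← Subgroup.zpowers_eq_closure, Subgroup.eq_top_iff']
    exact hg
  have e := QuotientGroup.quotientKerEquivRange f
  have hFG : Group.FG (G ⧸ f.ker) := Group.fg_of_surjective (f := e.symm.toMonoidHom) e.symm.surjective
  have hfin : Finite (G ⧸ f.ker) := hG f.ker hFG
  have hfinr : Finite ↥f.range := Finite.of_equiv _ e.toEquiv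
  -- but the range contains an element of infinite order
  have ha : (f g₀).toAdd ≠ 0 := by simpa using hg₀
  have hinj : Function.Injective
      (fun n : ℤ => (⟨f g₀ ^ n,
        zpow_mem (show f g₀ ∈ f.range from ⟨g₀, rfl⟩) n⟩ : ↥f.range)) := by
    intro m n hmn
    have h1 : f g₀ ^ m = f g₀ ^ n := congrArg Subtype.val hmn
    have h2 : (f g₀).toAdd * m = (f g₀).toAdd * n := by
      rw [← Int.toAdd_zpow, ← Int.toAdd_zpow, h1]
    exact mul_left_cancel₀ ha h2
  exact (not_finite_iff_infinite.mpr inferInstance) (Finite.of_injective _ hinj)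

/-- Auxiliary downward induction: if every hom from `G` to ℤ is trivial, and the lower
central series reaches `⊥`, then every hom from each term of the series to ℤ is trivial. -/
lemma homZ_lcs_aux {G : Type*} [Group G] (hG : ∀ f : G →* Multiplicative ℤ, f = 1) :
    ∀ d n, lowerCentralSeries (⊤ : Subgroup G) (n + d) = ⊥ →
      ∀ f : ↥(lowerCentralSeries (⊤ : Subgroup G) n) →* Multiplicative ℤ, f = 1 := by
  intro d
  induction d with
  | zero =>
    intro n h f
    rw [Nat.add_zero] at h
    haveI : Subsingleton ↥(lowerCentralSeries (⊤ : Subgroup G) n) := by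
      rw [h]; infer_instance
    ext x
    have hx : x = 1 := Subsingleton.elim x 1
    simp [hx]
  | succ d ih =>
    intro n h f
    match n with
    | 0 =>
      have h2 := hG (f.comp (Subgroup.topEquiv (G := G)).symm.toMonoidHom)
      ext x
      have h3 := DFunLike.congr_fun h2 (x : G)
      simp only [MonoidHom.comp_apply, MonoidHom.one_apply] at h3 ⊢
      have hx : (Subgroup.topEquiv (G := G)).symm.toMonoidHom (x : G) = x := Subtype.ext rfl
      rw [← hx]
      exact h3
    | k + 1 =>
      have hsub : lowerCentralSeries (⊤ : Subgroup G) (k + 2) ≤ lowerCentralSeries (⊤ : Subgroup G) (k + 1) :=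
        lowerCentralSeries_antitone _ (by omega)
      have hIH : f.comp (Subgroup.inclusion hsub) = 1 :=
        ih (k + 2) (by rw [show k + 2 + d = k + 1 + (d + 1) by omega]; exact h)
          (f.comp (Subgroup.inclusion hsub))
      have hIH' : ∀ (y : G) (hy : y ∈ lowerCentralSeries (⊤ : Subgroup G) (k + 2)),
          f ⟨y, hsub hy⟩ = 1 := by
        intro y hy
        have := DFunLike.congr_fun hIH (⟨y, hy⟩ : ↥(lowerCentralSeries (⊤ : Subgroup G) (k + 2)))
        exact this
      -- conjugation invariance of f
      have hconj : ∀ (g : G) (c : ↥(lowerCentralSeries (⊤ : Subgroup G) (k + 1))),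
          f ⟨g * (c : G) * g⁻¹,
              (Subgroup.lowerCentralSeries_normal _ (k + 1)).conj_mem _ c.2 g⟩ = f c := by
        intro g c
        have hcm : ⁅g, (c : G)⁆ ∈ lowerCentralSeries (⊤ : Subgroup G) (k + 2) := by
          have h1 : ⁅(c : G), g⁻¹⁆ ∈ lowerCentralSeries (⊤ : Subgroup G) (k + 2) :=
            Subgroup.commutator_mem_commutator c.2 (Subgroup.mem_top g⁻¹)
          have : ⁅g, (c : G)⁆ = g * ⁅(c : G), g⁻¹⁆ * g⁻¹ := by
            simp only [commutatorElement_def]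
            group
          rw [this]
          exact (Subgroup.lowerCentralSeries_normal _ (k + 2)).conj_mem _ h1 g
        have heq : (⟨g * (c : G) * g⁻¹,
            (Subgroup.lowerCentralSeries_normal _ (k + 1)).conj_mem _ c.2 g⟩ :
              ↥(lowerCentralSeries (⊤ : Subgroup G) (k + 1))) = ⟨⁅g, (c : G)⁆, hsub hcm⟩ * c := by
          apply Subtype.ext
          simp only [Subgroup.coe_mul, commutatorElement_def]
          group
        rw [heq, map_mul, hIH' _ hcm, one_mul]
      -- for a fixed x in the previous term, g ↦ f ⁅x, g⁆ is a homomorphism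
      have hgen : ∀ (x : G) (hx : x ∈ lowerCentralSeries (⊤ : Subgroup G) k) (g : G),
          f ⟨⁅x, g⁆, Subgroup.commutator_mem_commutator hx (Subgroup.mem_top g)⟩ = 1 := by
        intro x hx
        have hmem : ∀ g : G, ⁅x, g⁆ ∈ lowerCentralSeries (⊤ : Subgroup G) (k + 1) := fun g =>
          Subgroup.commutator_mem_commutator hx (Subgroup.mem_top g)
        let F : G →* Multiplicative ℤ :=
          { toFun := fun g => f ⟨⁅x, g⁆, hmem g⟩
            map_one' := by
              show f ⟨⁅x, (1 : G)⁆, hmem 1⟩ = 1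
              have h1 : ⁅x, (1 : G)⁆ = 1 := by simp [commutatorElement_def]
              have : (⟨⁅x, (1 : G)⁆, hmem 1⟩ : ↥(lowerCentralSeries (⊤ : Subgroup G) (k + 1))) = 1 :=
                Subtype.ext h1
              rw [this, map_one]
            map_mul' := by
              intro g₁ g₂
              have hid : ⁅x, g₁ * g₂⁆ = ⁅x, g₁⁆ * (g₁ * ⁅x, g₂⁆ * g₁⁻¹) := by
                simp only [commutatorElement_def]
                group
              have heq : (⟨⁅x, g₁ * g₂⁆, hmem (g₁ * g₂)⟩ :
                  ↥(lowerCentralSeries (⊤ : Subgroup G) (k + 1))) =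
                  ⟨⁅x, g₁⁆, hmem g₁⟩ *
                    ⟨g₁ * ⁅x, g₂⁆ * g₁⁻¹,
                      (Subgroup.lowerCentralSeries_normal _ (k + 1)).conj_mem _ (hmem g₂) g₁⟩ := by
                apply Subtype.ext
                simpa using hid
              show f ⟨⁅x, g₁ * g₂⁆, hmem (g₁ * g₂)⟩ =
                f ⟨⁅x, g₁⁆, hmem g₁⟩ * f ⟨⁅x, g₂⁆, hmem g₂⟩
              rw [heq, map_mul, hconj g₁ ⟨⁅x, g₂⁆, hmem g₂⟩] }
        have hF := hG F
        intro g
        have := DFunLike.congr_fun hF g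
        simpa [F] using this
      -- conclude f = 1
      have hker : lowerCentralSeries (⊤ : Subgroup G) (k + 1) ≤
          Subgroup.map (lowerCentralSeries (⊤ : Subgroup G) (k + 1)).subtype f.ker := by
        show ⁅lowerCentralSeries (⊤ : Subgroup G) k, (⊤ : Subgroup G)⁆ ≤ _
        rw [Subgroup.commutator_le]
        intro p hp q _
        exact ⟨⟨⁅p, q⁆, Subgroup.commutator_mem_commutator hp (Subgroup.mem_top q)⟩,
          hgen p hp q, rfl⟩
      ext x
      obtain ⟨y, hy, hyx⟩ := hker x.2
      have : y = x := Subtype.ext hyx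
      rw [← this]
      simpa using hy

lemma homZ_lcs {G : Type*} [Group G] (hG : ∀ f : G →* Multiplicative ℤ, f = 1)
    (c : ℕ) (hc : lowerCentralSeries (⊤ : Subgroup G) c = ⊥) (n : ℕ) :
    ∀ f : ↥(lowerCentralSeries (⊤ : Subgroup G) n) →* Multiplicative ℤ, f = 1 := by
  refine homZ_lcs_aux hG c n ?_
  have h1 : lowerCentralSeries (⊤ : Subgroup G) (n + c) ≤ lowerCentralSeries (⊤ : Subgroup G) c :=
    lowerCentralSeries_antitone _ (by omega)
  rw [hc] at h1
  exact le_bot_iff.mp h1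

/-- The lower central series maps onto the lower central series under a surjective hom. -/
lemma lcs_map_eq {G H : Type*} [Group G] [Group H] (f : G →* H)
    (hf : Function.Surjective f) (n : ℕ) :
    Subgroup.map f (lowerCentralSeries (⊤ : Subgroup G) n) = lowerCentralSeries (⊤ : Subgroup H) n := by
  induction n with
  | zero =>
    show Subgroup.map f ⊤ = ⊤
    rw [← MonoidHom.range_eq_map]
    exact f.range_eq_top_of_surjective hf
  | succ n ih =>
    show Subgroup.map f ⁅lowerCentralSeries (⊤ : Subgroup G) n, (⊤ : Subgroup G)⁆ =
      ⁅lowerCentralSeries (⊤ : Subgroup H) n, (⊤ : Subgroup H)⁆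
    rw [Subgroup.map_commutator, ih, ← MonoidHom.range_eq_map,
      f.range_eq_top_of_surjective hf]

/-- A finitely generated commutative group with no nontrivial hom to ℤ is finite. -/
lemma finite_of_fg_comm_noZ {A : Type*} [CommGroup A] (hfg : Group.FG A)
    (h : ∀ f : A →* Multiplicative ℤ, f = 1) : Finite A := by
  haveI : AddGroup.FG (Additive A) := GroupFG.iff_add_fg.mp hfg
  obtain ⟨n, ι, fι, p, hp, e, ⟨φ⟩⟩ := AddCommGroup.equiv_free_prod_directSum_zmod (Additive A)
  rcases n with _ | m
  · haveI : ∀ i, NeZero (p i ^ e i) := fun i => ⟨(pow_pos (hp i).pos _).ne'⟩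
    haveI : Finite (⨁ i, ZMod (p i ^ e i)) :=
      Finite.of_equiv _ DFinsupp.equivFunOnFintype.symm
    haveI : Subsingleton (Fin 0 →₀ ℤ) := ⟨fun a b => Finsupp.ext fun i => Fin.elim0 i⟩
    haveI : Finite (Additive A) := Finite.of_equiv _ φ.symm.toEquiv
    exact Finite.of_equiv _ Additive.ofMul.symm
  · exfalso
    let g : Additive A →+ ℤ :=
      (Finsupp.applyAddHom (0 : Fin (m + 1))).comp
        ((AddMonoidHom.fst _ _).comp φ.toAddMonoidHom)
    let F : A →* Multiplicative ℤ :=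
      { toFun := fun a => Multiplicative.ofAdd (g (Additive.ofMul a))
        map_one' := by simp
        map_mul' := by intro a b; simp [← ofAdd_add] }
    have hF := h F
    set x : Additive A := φ.symm (Finsupp.single 0 1, 0) with hxdef
    have hx : g x = 1 := by
      simp [g, hxdef]
    have h1 : F (Additive.toMul x) = 1 := by rw [hF]; rfl
    have h2 : g x = 0 := by
      have : Multiplicative.ofAdd (g x) = 1 := h1
      exact Multiplicative.ofAdd.injective (by simpa using this)
    rw [hx] at h2
    exact one_ne_zero h2

/-- A finitely generated nilpotent group with no nontrivial hom to ℤ is finite. -/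
lemma finite_of_fg_nilpotent_noZ :
    ∀ (c : ℕ) (Q : Type*) [Group Q], lowerCentralSeries (⊤ : Subgroup Q) c = ⊥ → Group.FG Q →
      (∀ f : Q →* Multiplicative ℤ, f = 1) → Finite Q := by
  intro c
  induction c with
  | zero =>
    intro Q _ hbot _ _
    haveI : Subsingleton Q := by
      refine subsingleton_of_forall_eq 1 fun x => ?_
      have hx : x ∈ (⊥ : Subgroup Q) := hbot ▸ Subgroup.mem_top x
      exact Subgroup.mem_bot.mp hx
    exact Finite.of_subsingleton
  | succ c ih =>
    intro Q _ hbot hfg hhom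
    haveI := hfg
    set K : Subgroup Q := lowerCentralSeries (⊤ : Subgroup Q) c with hKdef
    haveI : K.Normal := Subgroup.lowerCentralSeries_normal _ c
    have hK1 : ⁅K, (⊤ : Subgroup Q)⁆ = ⊥ := hbot
    have hKcent : K ≤ Subgroup.center Q := by
      intro k hk
      rw [Subgroup.mem_center_iff]
      intro g
      have hcomm : ⁅k, g⁆ ∈ (⊥ : Subgroup Q) :=
        hK1 ▸ Subgroup.commutator_mem_commutator hk (Subgroup.mem_top g)
      have := commutatorElement_eq_one_iff_mul_comm.mp (Subgroup.mem_bot.mp hcomm)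
      exact this.symm
    have hmapbot : lowerCentralSeries (⊤ : Subgroup (Q ⧸ K)) c = ⊥ := by
      rw [← lcs_map_eq (QuotientGroup.mk' K) (QuotientGroup.mk'_surjective K) c]
      rw [Subgroup.map_eq_bot_iff, QuotientGroup.ker_mk']
    have hQKfg : Group.FG (Q ⧸ K) := Group.fg_of_surjective (QuotientGroup.mk'_surjective K)
    have hQKhom : ∀ f : (Q ⧸ K) →* Multiplicative ℤ, f = 1 := by
      intro f
      have h2 := hhom (f.comp (QuotientGroup.mk' K))
      ext q
      have := DFunLike.congr_fun h2 q
      simpa using this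
    haveI hQKfin : Finite (Q ⧸ K) := ih (Q ⧸ K) hmapbot hQKfg hQKhom
    haveI : K.FiniteIndex := Subgroup.finiteIndex_of_finite_quotient
    haveI hKfg : Group.FG ↥K := Subgroup.fg_of_index_ne_zero K
    letI : CommGroup ↥K :=
      { (inferInstance : Group ↥K) with
        mul_comm := fun a b =>
          Subtype.ext (Subgroup.mem_center_iff.mp (hKcent b.2) a.1) }
    have hKhom : ∀ f : ↥K →* Multiplicative ℤ, f = 1 := homZ_lcs hhom (c + 1) hbot c
    haveI : Finite ↥K := finite_of_fg_comm_noZ hKfg hKhom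
    exact Finite.of_equiv ((Q ⧸ K) × ↥K) (Subgroup.groupEquivQuotientProdSubgroup (s := K)).symm

/-- the derived subgroup of an upper-finite nilpotent group is upper-finite. -/
theorem stmt_11 (G : Type) [Group G] (hnil : Group.IsNilpotent G) (hG : UpperFinite G) :
    UpperFinite (commutator G) := by
  intro N _ hFG
  have hhomG : ∀ f : G →* Multiplicative ℤ, f = 1 := fun f => homZ_of_upperFinite hG f
  haveI := hnil
  obtain ⟨c, hc⟩ := nilpotent_iff_lowerCentralSeries.mp hnil
  have hH : ∀ f : ↥(commutator G) →* Multiplicative ℤ, f = 1 := by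
    have := homZ_lcs hhomG c hc 1
    exact this
  have hQhom : ∀ f : (↥(commutator G) ⧸ N) →* Multiplicative ℤ, f = 1 := by
    intro f
    have h2 := hH (f.comp (QuotientGroup.mk' N))
    ext q
    have := DFunLike.congr_fun h2 q
    simpa using this
  haveI : Group.IsNilpotent ↥(commutator G) := inferInstance
  haveI : Group.IsNilpotent (↥(commutator G) ⧸ N) := inferInstance
  obtain ⟨c', hc'⟩ := nilpotent_iff_lowerCentralSeries.mp ‹Group.IsNilpotent (↥(commutator G) ⧸ N)›
  exact finite_of_fg_nilpotent_noZ c' _ hc' hFG hQhom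
end

section
/- Let G be an upper-finite nilpotent group. Then every term γ_i(G) of the lower central series of G is upper-finite. -/
open DirectSum
open scoped commutatorElement

lemma upperFinite_of_finite (G : Type*) [Group G] [Finite G] : UpperFinite G :=
  fun _ _ _ => Quotient.finite _

lemma UpperFinite.of_surjective {A B : Type*} [Group A] [Group B] (hA : UpperFinite A)
    (f : A →* B) (hf : Function.Surjective f) : UpperFinite B := by
  intro N hN hFG
  let g := (QuotientGroup.mk' N).comp f
  have hg : Function.Surjective g := (QuotientGroup.mk'_surjective N).comp hf
  let e := QuotientGroup.quotientKerEquivOfSurjective g hg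
  haveI : Group.FG (A ⧸ g.ker) :=
    @Group.fg_of_surjective _ _ _ _ hFG e.symm.toMonoidHom e.symm.surjective
  have : Finite (A ⧸ g.ker) := hA g.ker inferInstance
  exact Finite.of_equiv _ e.toEquiv

lemma UpperFinite.finite_of_fg {A : Type*} [Group A] (hA : UpperFinite A) [Group.FG A] :
    Finite A := by
  haveI : Group.FG (A ⧸ (⊥ : Subgroup A)) :=
    Group.fg_of_surjective (QuotientGroup.mk'_surjective ⊥)
  have : Finite (A ⧸ (⊥ : Subgroup A)) := hA ⊥ inferInstance
  exact Finite.of_equiv _ (QuotientGroup.quotientBot (G := A)).toEquiv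

lemma hom_to_int_trivial {G : Type*} [Group G] (hG : UpperFinite G)
    (ψ : G →* Multiplicative ℤ) (g : G) : ψ g = 1 := by
  by_contra h
  have hfg : Group.FG (G ⧸ ψ.ker) := by
    haveI : IsCyclic ψ.range := by infer_instance
    obtain ⟨x, hx⟩ := IsCyclic.exists_generator (α := ψ.range)
    haveI : Group.FG ψ.range := Group.fg_iff.mpr ⟨{x}, by
      rw [← Subgroup.zpowers_eq_closure]
      exact eq_top_iff.mpr fun y _ => hx y, Set.finite_singleton x⟩
    exact @Group.fg_of_surjective _ _ _ _ this
      (QuotientGroup.quotientKerEquivRange ψ).symm.toMonoidHom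
      (QuotientGroup.quotientKerEquivRange ψ).symm.surjective
  have hfin : Finite (G ⧸ ψ.ker) := hG ψ.ker hfg
  have hfinr : Finite ψ.range := Finite.of_equiv _ (QuotientGroup.quotientKerEquivRange ψ).toEquiv
  have hord : IsOfFinOrder (ψ g) := by
    have := isOfFinOrder_of_finite (⟨ψ g, MonoidHom.mem_range.mpr ⟨g, rfl⟩⟩ : ψ.range)
    exact ψ.range.subtype.isOfFinOrder this
  obtain ⟨n, hn, h1⟩ := isOfFinOrder_iff_pow_eq_one.mp hord
  apply h
  have : (n : ℤ) * (ψ g).toAdd = 0 := by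
    have := congrArg Multiplicative.toAdd h1
    simpa [toAdd_pow] using this
  have := mul_eq_zero.mp this
  rcases this with h' | h'
  · exact absurd h' (by exact_mod_cast hn.ne')
  · rw [← ofAdd_toAdd (ψ g), h']; rfl

lemma homLCS_trivial {G : Type*} [Group G] (hG : UpperFinite G) (i : ℕ)
    (φ : (⊤ : Subgroup G).lowerCentralSeries i →* Multiplicative ℤ)
    (hφ : ∀ (x : G) (hx : x ∈ (⊤ : Subgroup G).lowerCentralSeries (i + 1)),
      φ ⟨x, Subgroup.lowerCentralSeries_antitone ⊤ (Nat.le_succ i) hx⟩ = 1)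
    (g : (⊤ : Subgroup G).lowerCentralSeries i) : φ g = 1 := by
  induction i with
  | zero =>
    exact hom_to_int_trivial hG (φ.comp (Subgroup.topEquiv (G := G)).symm.toMonoidHom) (g : G)
  | succ i _ =>
    -- conjugation invariance
    have conj_eq : ∀ (b : G) (c : G) (hc : c ∈ (⊤ : Subgroup G).lowerCentralSeries (i + 1)),
        φ ⟨b * c * b⁻¹, (Subgroup.normal_of_characteristic _ : ((⊤ : Subgroup G).lowerCentralSeries (i + 1)).Normal).conj_mem c hc b⟩ = φ ⟨c, hc⟩ := by
      intro b c hc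
      have hcomm : ⁅b, c⁆ ∈ (⊤ : Subgroup G).lowerCentralSeries (i + 2) := by
        have h1 : ⁅c, b⁆ ∈ (⊤ : Subgroup G).lowerCentralSeries (i + 2) :=
          Subgroup.commutator_mem_commutator hc (Subgroup.mem_top b)
        have : ⁅b, c⁆ = ⁅c, b⁆⁻¹ := (commutatorElement_inv c b).symm
        rw [this]
        exact inv_mem h1
      have key : (⟨b * c * b⁻¹, (Subgroup.normal_of_characteristic _ : ((⊤ : Subgroup G).lowerCentralSeries (i + 1)).Normal).conj_mem c hc b⟩ :
          (⊤ : Subgroup G).lowerCentralSeries (i + 1)) =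
          ⟨⁅b, c⁆, Subgroup.lowerCentralSeries_antitone ⊤ (Nat.le_succ (i+1)) hcomm⟩ * ⟨c, hc⟩ := by
        ext
        simp only [Subgroup.coe_mul, commutatorElement_def]
        group
      rw [key, map_mul, hφ _ hcomm, one_mul]
    -- main
    obtain ⟨gv, hg⟩ := g
    have main : ∀ (x : G), x ∈ Subgroup.closure
        {g | ∃ g₁ ∈ (⊤ : Subgroup G).lowerCentralSeries i, ∃ g₂ ∈ (⊤ : Subgroup G), ⁅g₁, g₂⁆ = g} →
        ∀ (h : x ∈ (⊤ : Subgroup G).lowerCentralSeries (i + 1)), φ ⟨x, h⟩ = 1 := by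
      intro x hx
      induction hx using Subgroup.closure_induction with
      | mem x hx =>
        obtain ⟨p, hp, q, -, rfl⟩ := hx
        intro h
        have hmem : ∀ r : G, ⁅p, r⁆ ∈ (⊤ : Subgroup G).lowerCentralSeries (i + 1) := fun r =>
          Subgroup.commutator_mem_commutator hp (Subgroup.mem_top r)
        let ψ : G →* Multiplicative ℤ :=
          { toFun := fun r => φ ⟨⁅p, r⁆, hmem r⟩
            map_one' := by
              have h1 : (⟨⁅p, 1⁆, hmem 1⟩ : (⊤ : Subgroup G).lowerCentralSeries (i + 1)) = 1 := by
                ext; simp [commutatorElement_def]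
              show φ ⟨⁅p, 1⁆, hmem 1⟩ = 1
              rw [h1, map_one]
            map_mul' := by
              intro q r
              have key : (⟨⁅p, q * r⁆, hmem _⟩ : (⊤ : Subgroup G).lowerCentralSeries (i + 1)) =
                  ⟨⁅p, q⁆, hmem q⟩ *
                  ⟨q * ⁅p, r⁆ * q⁻¹,
                    (Subgroup.normal_of_characteristic _ : ((⊤ : Subgroup G).lowerCentralSeries (i + 1)).Normal).conj_mem _ (hmem r) q⟩ := by
                ext; simp only [Subgroup.coe_mul, commutatorElement_def]; group
              show φ ⟨⁅p, q * r⁆, hmem _⟩ = φ ⟨⁅p, q⁆, hmem q⟩ * φ ⟨⁅p, r⁆, hmem r⟩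
              rw [key, map_mul, conj_eq q _ (hmem r)] }
        exact hom_to_int_trivial hG ψ q
      | one =>
        intro h
        have h1 : (⟨1, h⟩ : (⊤ : Subgroup G).lowerCentralSeries (i + 1)) = 1 := rfl
        rw [h1, map_one]
      | mul x y hx hy ihx ihy =>
        have hx1 : x ∈ (⊤ : Subgroup G).lowerCentralSeries (i + 1) := by
          show x ∈ ⁅(⊤ : Subgroup G).lowerCentralSeries i, ⊤⁆; rw [Subgroup.commutator_def]; exact hx
        have hy1 : y ∈ (⊤ : Subgroup G).lowerCentralSeries (i + 1) := by
          show y ∈ ⁅(⊤ : Subgroup G).lowerCentralSeries i, ⊤⁆; rw [Subgroup.commutator_def]; exact hy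
        intro h
        have key : (⟨x * y, h⟩ : (⊤ : Subgroup G).lowerCentralSeries (i + 1)) = ⟨x, hx1⟩ * ⟨y, hy1⟩ := rfl
        rw [key, map_mul, ihx hx1, ihy hy1, one_mul]
      | inv x hx ihx =>
        have hx1 : x ∈ (⊤ : Subgroup G).lowerCentralSeries (i + 1) := by
          show x ∈ ⁅(⊤ : Subgroup G).lowerCentralSeries i, ⊤⁆; rw [Subgroup.commutator_def]; exact hx
        intro h
        have key : (⟨x⁻¹, h⟩ : (⊤ : Subgroup G).lowerCentralSeries (i + 1)) = (⟨x, hx1⟩)⁻¹ := rfl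
        rw [key, map_inv, ihx hx1, inv_one]
    have hg2 : gv ∈ ⁅(⊤ : Subgroup G).lowerCentralSeries i, ⊤⁆ := hg
    rw [Subgroup.commutator_def] at hg2
    exact main gv hg2 hg

lemma fg_comm_infinite_hom {Q : Type*} [Group Q] (hcomm : ∀ a b : Q, a * b = b * a)
    (hfg : Group.FG Q) (hinf : Infinite Q) :
    ∃ f : Q →* Multiplicative ℤ, ∃ q, f q ≠ 1 := by
  letI : CommGroup Q := { (inferInstance : Group Q) with mul_comm := hcomm }
  haveI : AddGroup.FG (Additive Q) := GroupFG.iff_add_fg.mp hfg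
  obtain ⟨n, ι, fι, p, hp, e, ⟨f⟩⟩ := AddCommGroup.equiv_free_prod_directSum_zmod (Additive Q)
  cases n with
  | zero =>
    exfalso
    haveI : ∀ idx : ι, NeZero (p idx ^ e idx) :=
      fun idx => ⟨pow_ne_zero _ (hp idx).pos.ne'⟩
    haveI : Finite (⨁ i : ι, ZMod (p i ^ e i)) :=
      Finite.of_equiv _ (DFinsupp.equivFunOnFintype).symm
    haveI : Finite (Additive Q) := Finite.of_equiv _ f.toEquiv.symm
    haveI : Infinite (Additive Q) :=
      Infinite.of_injective (Additive.ofMul : Q → Additive Q) fun a b h => h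
    exact not_finite (Additive Q)
  | succ m =>
    let proj : Additive Q →+ ℤ :=
      (Finsupp.applyAddHom (0 : Fin (m + 1))).comp
        ((AddMonoidHom.fst _ _).comp f.toAddMonoidHom)
    refine ⟨AddMonoidHom.toMultiplicativeRight proj,
      Additive.toMul (f.symm (Finsupp.single 0 1, 0)), ?_⟩
    have : proj (f.symm (Finsupp.single 0 1, 0)) = 1 := by
      simp [proj]
    intro hcon
    have h2 : proj (f.symm (Finsupp.single 0 1, 0)) = 0 := by
      have := congrArg Multiplicative.toAdd hcon
      simpa using this
    rw [this] at h2
    exact one_ne_zero h2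

lemma uf_step {G : Type*} [Group G] (hG : UpperFinite G) (i : ℕ)
    (ih : UpperFinite ((⊤ : Subgroup G).lowerCentralSeries (i + 1))) :
    UpperFinite ((⊤ : Subgroup G).lowerCentralSeries i) := by
  intro N hN hFG
  let π : (⊤ : Subgroup G).lowerCentralSeries i →* ((⊤ : Subgroup G).lowerCentralSeries i) ⧸ N := QuotientGroup.mk' N
  let K' : Subgroup ((⊤ : Subgroup G).lowerCentralSeries i) :=
    ((⊤ : Subgroup G).lowerCentralSeries (i + 1)).subgroupOf ((⊤ : Subgroup G).lowerCentralSeries i)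
  haveI hK'n : K'.Normal := Subgroup.normal_subgroupOf
  let L : Subgroup (((⊤ : Subgroup G).lowerCentralSeries i) ⧸ N) := K'.map π
  haveI hLn : L.Normal := hK'n.map π (QuotientGroup.mk'_surjective N)
  let ρ : (⊤ : Subgroup G).lowerCentralSeries i →* (((⊤ : Subgroup G).lowerCentralSeries i) ⧸ N) ⧸ L :=
    (QuotientGroup.mk' L).comp π
  have hρ : Function.Surjective ρ :=
    (QuotientGroup.mk'_surjective L).comp (QuotientGroup.mk'_surjective N)
  have hQfg : Group.FG ((((⊤ : Subgroup G).lowerCentralSeries i) ⧸ N) ⧸ L) :=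
    @Group.fg_of_surjective _ _ _ _ hFG _ (QuotientGroup.mk'_surjective L)
  have hker : ∀ x : (⊤ : Subgroup G).lowerCentralSeries i, x ∈ K' → ρ x = 1 := fun x hx =>
    (QuotientGroup.eq_one_iff _).mpr (Subgroup.mem_map_of_mem π hx)
  have hcommK : ∀ x y : (⊤ : Subgroup G).lowerCentralSeries i, ⁅x, y⁆ ∈ K' := by
    intro x y
    rw [Subgroup.mem_subgroupOf]
    have hco : ((⁅x, y⁆ : (⊤ : Subgroup G).lowerCentralSeries i) : G) = ⁅(x : G), (y : G)⁆ := by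
      simp [commutatorElement_def]
    rw [hco]
    exact Subgroup.commutator_mem_commutator x.2 (Subgroup.mem_top _)
  have hcomm : ∀ a b : (((⊤ : Subgroup G).lowerCentralSeries i) ⧸ N) ⧸ L, a * b = b * a := by
    intro a b
    obtain ⟨x, rfl⟩ := hρ a
    obtain ⟨y, rfl⟩ := hρ b
    rw [← map_mul, ← map_mul]
    have hid : x * y = ⁅x, y⁆ * (y * x) := by rw [commutatorElement_def]; group
    rw [hid, map_mul, hker _ (hcommK x y), one_mul]
  have hQfin : Finite ((((⊤ : Subgroup G).lowerCentralSeries i) ⧸ N) ⧸ L) := by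
    by_contra hinf
    rw [not_finite_iff_infinite] at hinf
    obtain ⟨f, q, hq⟩ := fg_comm_infinite_hom hcomm hQfg hinf
    obtain ⟨x, rfl⟩ := hρ q
    have vanish : ∀ (z : G) (hz : z ∈ (⊤ : Subgroup G).lowerCentralSeries (i + 1)),
        (f.comp ρ) ⟨z, Subgroup.lowerCentralSeries_antitone ⊤ (Nat.le_succ i) hz⟩ = 1 := by
      intro z hz
      have hmem : (⟨z, Subgroup.lowerCentralSeries_antitone ⊤ (Nat.le_succ i) hz⟩ :
          (⊤ : Subgroup G).lowerCentralSeries i) ∈ K' := by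
        rw [Subgroup.mem_subgroupOf]; exact hz
      simp only [MonoidHom.comp_apply, hker _ hmem, map_one]
    exact hq (homLCS_trivial hG i (f.comp ρ) vanish x)
  haveI : L.FiniteIndex := @Subgroup.finiteIndex_of_finite_quotient _ _ L hQfin
  haveI := hFG
  haveI : Group.FG L := Subgroup.fg_of_index_ne_zero L
  have hUFK' : UpperFinite K' :=
    ih.of_surjective
      (Subgroup.subgroupOfEquivOfLe
        (Subgroup.lowerCentralSeries_antitone ⊤ (Nat.le_succ i))).symm.toMonoidHom
      (MulEquiv.surjective _)
  let ontoL : K' →* L :=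
    (π.comp K'.subtype).codRestrict L fun x => Subgroup.mem_map_of_mem π x.2
  have hontoL : Function.Surjective ontoL := by
    rintro ⟨y, hy⟩
    obtain ⟨x, hx, rfl⟩ := Subgroup.mem_map.mp hy
    exact ⟨⟨x, hx⟩, rfl⟩
  have hLuf : UpperFinite L := hUFK'.of_surjective ontoL hontoL
  haveI : Finite L := hLuf.finite_of_fg
  haveI := hQfin
  exact Finite.of_equiv _ (Subgroup.groupEquivQuotientProdSubgroup (s := L)).symm

/-- every term of the lower central series of an upper-finite nilpotent
group is upper-finite. -/
theorem stmt_12 (G : Type) [Group G] (hnil : Group.IsNilpotent G) (hG : UpperFinite G)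
    (i : ℕ) : UpperFinite ((⊤ : Subgroup G).lowerCentralSeries i) := by
  obtain ⟨n, hn⟩ := Subgroup.nilpotent_iff_lowerCentralSeries.mp hnil
  have key : ∀ j, UpperFinite ((⊤ : Subgroup G).lowerCentralSeries (n - j)) := by
    intro j
    induction j with
    | zero =>
      haveI : Subsingleton ((⊤ : Subgroup G).lowerCentralSeries (n - 0)) := by
        rw [Nat.sub_zero, hn]; infer_instance
      haveI : Finite ((⊤ : Subgroup G).lowerCentralSeries (n - 0)) := Finite.of_subsingleton
      exact upperFinite_of_finite _
    | succ j ihj =>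
      by_cases hj : j < n
      · have heq : n - j = (n - (j + 1)) + 1 := by omega
        exact uf_step hG (n - (j + 1)) (by rw [← heq]; exact ihj)
      · have heq : n - (j + 1) = n - j := by omega
        rw [heq]; exact ihj
  by_cases hi : i ≤ n
  · have heq : i = n - (n - i) := by omega
    rw [heq]; exact key (n - i)
  · have hbot : (⊤ : Subgroup G).lowerCentralSeries i = ⊥ := by
      have hle := Subgroup.lowerCentralSeries_antitone (⊤ : Subgroup G) (show n ≤ i by omega)
      rw [hn] at hle
      exact le_bot_iff.mp hle
    haveI : Subsingleton ((⊤ : Subgroup G).lowerCentralSeries i) := by rw [hbot]; infer_instance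
    haveI : Finite ((⊤ : Subgroup G).lowerCentralSeries i) := Finite.of_subsingleton
    exact upperFinite_of_finite _
end

section
/- Let G be a torsion-free nilpotent group of finite Hirsch length. If the centre ζ(G) of G is finitely generated, then G is finitely generated. -/
open scoped commutatorElement


/-- `H` has a subnormal series of length at most `n` with cyclic factors.
(A step `s i ◃ s (i+1)` has cyclic factor iff `s (i+1) = s i ⊔ ⟨x⟩` for some `x`.) -/
def IsPolycyclicOfLengthLe (H : Type*) [Group H] (n : ℕ) : Prop :=
  ∃ m, m ≤ n ∧ ∃ s : Fin (m + 1) → Subgroup H, s 0 = ⊥ ∧ s (Fin.last m) = ⊤ ∧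
    ∀ i : Fin m, s i.castSucc ≤ s i.succ ∧
      (∀ g ∈ s i.succ, ∀ k ∈ s i.castSucc, g * k * g⁻¹ ∈ s i.castSucc) ∧
      ∃ x : H, s i.succ = s i.castSucc ⊔ Subgroup.zpowers x

/-- `G` has finite Hirsch length: there is a uniform bound `n` such that every finitely
generated subgroup of `G` is polycyclic with a (sub)normal cyclic series of length ≤ `n`.
(For torsion-free nilpotent groups this is equivalent to finite Hirsch length.) -/
def HasFiniteHirschLength (G : Type*) [Group G] : Prop :=
  ∃ n : ℕ, ∀ H : Subgroup G, Group.FG H → IsPolycyclicOfLengthLe H n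

/-- every group that is polycyclic of length ≤ n is generated by ≤ n elements -/
lemma gens_of_polycyclic {H : Type*} [Group H] {n : ℕ} (h : IsPolycyclicOfLengthLe H n) :
    ∃ T : Finset H, T.card ≤ n ∧ Subgroup.closure (T : Set H) = ⊤ := by
  classical
  obtain ⟨m, hmn, s, hs0, hstop, hstep⟩ := h
  choose x hx using fun i => (hstep i).2.2
  refine ⟨Finset.univ.image x, ?_, ?_⟩
  · refine le_trans Finset.card_image_le ?_
    simpa using hmn
  · have key : ∀ k : ℕ, ∀ hk : k < m + 1,
        s ⟨k, hk⟩ ≤ Subgroup.closure ((Finset.univ.image x : Finset H) : Set H) := by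
      intro k
      induction k with
      | zero =>
        intro hk
        have h0 : (⟨0, hk⟩ : Fin (m+1)) = 0 := rfl
        rw [h0, hs0]
        exact bot_le
      | succ k ih =>
        intro hk
        have hkm : k < m := Nat.lt_of_succ_lt_succ hk
        have hi : (⟨k+1, hk⟩ : Fin (m+1)) = (⟨k, hkm⟩ : Fin m).succ := rfl
        have hc : (⟨k, hkm⟩ : Fin m).castSucc = (⟨k, Nat.lt_succ_of_lt hkm⟩ : Fin (m+1)) := rfl
        rw [hi, hx ⟨k, hkm⟩, hc]
        apply sup_le
        · exact ih _
        · rw [Subgroup.zpowers_le]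
          apply Subgroup.subset_closure
          simp only [Finset.coe_image, Finset.coe_univ, Set.image_univ]
          exact Set.mem_range_self _
    rw [eq_top_iff, ← hstop]
    exact key m (Nat.lt_succ_self m)

/-- every finite subset generates a subgroup needing only `n` generators -/
def NGen (n : ℕ) (A : Type*) [Group A] : Prop :=
  ∀ S : Finset A, ∃ T : Finset A, T.card ≤ n ∧
    Subgroup.closure (T : Set A) = Subgroup.closure (S : Set A)

lemma ngen_of_hirsch {G : Type*} [Group G] {n : ℕ}
    (hh : ∀ H : Subgroup G, Group.FG H → IsPolycyclicOfLengthLe H n) : NGen n G := by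
  classical
  intro S
  set H := Subgroup.closure (S : Set G) with hH
  have hfg : Group.FG H := by
    rw [Group.fg_iff_subgroup_fg]
    exact ⟨S, rfl⟩
  obtain ⟨T, hT, htop⟩ := gens_of_polycyclic (hh H hfg)
  refine ⟨T.image (Subgroup.subtype H), le_trans Finset.card_image_le hT, ?_⟩
  have e : Subgroup.closure ((T.image (Subgroup.subtype H) : Finset G) : Set G)
      = Subgroup.map H.subtype (Subgroup.closure (T : Set H)) := by
    rw [MonoidHom.map_closure, Finset.coe_image]
  rw [e, htop, ← MonoidHom.range_eq_map, Subgroup.range_subtype]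

/-- NGen descends to subgroups -/
lemma NGen.subgroup {G : Type*} [Group G] {n : ℕ} (h : NGen n G) (H : Subgroup G) :
    NGen n H := by
  classical
  intro S
  obtain ⟨T, hTc, hT⟩ := h (S.image H.subtype)
  have hSle : Subgroup.closure ((S.image H.subtype : Finset G) : Set G) ≤ H := by
    rw [Subgroup.closure_le]
    intro g hg
    simp only [Finset.coe_image] at hg
    obtain ⟨a, _, rfl⟩ := hg
    exact a.2
  have hTsub : ∀ t ∈ T, t ∈ H := by
    intro t ht
    have h1 : t ∈ Subgroup.closure (T : Set G) := Subgroup.subset_closure ht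
    rw [hT] at h1
    exact hSle h1
  refine ⟨T.attach.image (fun t => (⟨t.1, hTsub t.1 t.2⟩ : H)), ?_, ?_⟩
  · exact le_trans Finset.card_image_le (by simpa using hTc)
  · apply Subgroup.map_injective H.subtype_injective
    rw [MonoidHom.map_closure, MonoidHom.map_closure, Finset.coe_image]
    have e1 : (H.subtype '' ((fun t : {x // x ∈ T} => (⟨t.1, hTsub t.1 t.2⟩ : H)) '' T.attach))
        = (T : Set G) := by
      ext g
      constructor
      · rintro ⟨a, ⟨t, _, rfl⟩, rfl⟩
        exact t.2
      · intro hg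
        exact ⟨⟨g, hTsub g hg⟩, ⟨⟨g, hg⟩, by simp, rfl⟩, rfl⟩
    have e2 : (H.subtype '' (S : Set H)) = ((S.image H.subtype : Finset G) : Set G) := by
      rw [Finset.coe_image]
    rw [e1, e2, hT]

/-- NGen pushes along surjective homs -/
lemma NGen.of_surjective {G K : Type*} [Group G] [Group K] {n : ℕ} (h : NGen n G)
    (f : G →* K) (hf : Function.Surjective f) : NGen n K := by
  classical
  intro S
  choose lift hlift using hf
  obtain ⟨T, hTc, hT⟩ := h (S.image lift)
  refine ⟨T.image f, le_trans Finset.card_image_le hTc, ?_⟩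
  rw [Finset.coe_image, ← MonoidHom.map_closure, hT, Finset.coe_image,
    MonoidHom.map_closure]
  congr 1
  rw [Set.image_image]
  simp [hlift]


section Malcev
variable {G : Type*} [Group G]

/-- key identity: if `x` commutes with `⁅a,x⁆` then `⁅a, x^n⁆ = ⁅a,x⁆^n`. -/
lemma comm_pow_eq (a x : G) (h : Commute x ⁅a, x⁆) (n : ℕ) : ⁅a, x^n⁆ = ⁅a, x⁆ ^ n := by
  set c := ⁅a, x⁆ with hc
  have hax : a * x * a⁻¹ = c * x := by
    rw [hc]; group
  have key : ∀ m : ℕ, a * x ^ m * a⁻¹ = c ^ m * x ^ m := by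
    intro m
    induction m with
    | zero => simp
    | succ m ih =>
      have e1 : a * x ^ (m+1) * a⁻¹ = (a * x ^ m * a⁻¹) * (a * x * a⁻¹) := by
        rw [pow_succ]; group
      rw [e1, ih, hax, pow_succ, pow_succ]
      have hcx : x ^ m * c = c * x ^ m := (h.pow_left m).eq
      calc c ^ m * x ^ m * (c * x) = c ^ m * (x ^ m * c) * x := by group
        _ = c ^ m * (c * x ^ m) * x := by rw [hcx]
        _ = c ^ m * c * (x ^ m * x) := by group
  show a * x ^ n * a⁻¹ * (x ^ n)⁻¹ = c ^ n
  rw [key n]; group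

/-- Mal'cev: in a torsion-free nilpotent group, if `x^n` commutes with `y` (n>0) then so does `x`. -/
lemma malcev_commute [Group.IsNilpotent G]
    (htf : ∀ g : G, g ≠ 1 → ¬ IsOfFinOrder g)
    (x y : G) (n : ℕ) (hn : 0 < n) (h : Commute y (x ^ n)) : Commute y x := by
  have tf : ∀ g : G, g ^ n = 1 → g = 1 := by
    intro g hg
    by_contra hne
    exact htf g hne (isOfFinOrder_iff_pow_eq_one.mpr ⟨n, hn, hg⟩)
  obtain ⟨N, hN⟩ := nilpotent_iff_lowerCentralSeries.mp ‹_›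
  set z : ℕ → G := fun m => Nat.rec y (fun _ w => ⁅w, x⁆) m with hz
  have hz0 : z 0 = y := rfl
  have hzs : ∀ m, z (m + 1) = ⁅z m, x⁆ := fun m => rfl
  have hmem : ∀ m, z m ∈ Subgroup.lowerCentralSeries (⊤ : Subgroup G) m := by
    intro m
    induction m with
    | zero => trivial
    | succ m ih =>
      rw [hzs, lowerCentralSeries_succ]
      exact Subgroup.subset_closure ⟨z m, ih, x, trivial, rfl⟩
  have hcomm : ∀ m, Commute (z m) (x ^ n) := by
    intro m
    induction m with
    | zero => exact h
    | succ m ih =>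
      have hxz : Commute (x ^ n) (z m) := ih.symm
      have hxx : Commute (x ^ n) x := ((Commute.refl x).pow_left n)
      have : Commute (x ^ n) (z m * x * (z m)⁻¹ * x⁻¹) :=
        ((hxz.mul_right hxx).mul_right hxz.inv_right).mul_right hxx.inv_right
      rw [hzs]
      exact this.symm
  have hdown : ∀ m, z (m + 2) = 1 → z (m + 1) = 1 := by
    intro m h2
    have hcxz : Commute x (z (m+1)) := by
      have h' : ⁅z (m+1), x⁆ = 1 := h2
      exact (commutatorElement_eq_one_iff_commute.mp h').symm
    have hid : ⁅z m, x ^ n⁆ = ⁅z m, x⁆ ^ n :=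
      comm_pow_eq (z m) x hcxz n
    have h1 : ⁅z m, x ^ n⁆ = 1 := commutatorElement_eq_one_iff_commute.mpr (hcomm m)
    have hpow : z (m+1) ^ n = 1 := by rw [hzs]; rw [h1] at hid; exact hid.symm
    exact tf _ hpow
  have hzN : z N = 1 := by
    have := hmem N
    rw [hN] at this
    exact Subgroup.mem_bot.mp this
  have chain : ∀ j, j ≤ N → z (N + 1 - j) = 1 := by
    intro j
    induction j with
    | zero =>
      intro _
      rw [Nat.sub_zero, hzs, hzN]
      show 1 * x * 1⁻¹ * x⁻¹ = 1
      group
    | succ j ih =>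
      intro hj
      have prev : z (N + 1 - j) = 1 := ih (Nat.le_of_succ_le hj)
      obtain ⟨m, hm⟩ : ∃ m, N - j = m + 1 := ⟨N - j - 1, by omega⟩
      rw [show N + 1 - (j+1) = m + 1 from by omega]
      apply hdown m
      rw [show m + 2 = N + 1 - j from by omega]
      exact prev
  have hz1 : z 1 = 1 := by
    have := chain N le_rfl
    rwa [show N + 1 - N = 1 from by omega] at this
  have hyx : ⁅y, x⁆ = 1 := hz1
  exact commutatorElement_eq_one_iff_commute.mp hyx

end Malcev


section FGEmbed

/-- A commutative group embedding into a finite product of `ℤ`s is finitely generated. -/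
lemma fg_of_injective_pi_int {K : Type*} [CommGroup K] {κ : Type*} [Finite κ]
    (Φ : K →* (κ → Multiplicative ℤ)) (hinj : Function.Injective Φ) : Group.FG K := by
  cases nonempty_fintype κ
  let f : Additive K →+ (κ → ℤ) :=
    { toFun := fun a => fun i => Multiplicative.toAdd (Φ (Additive.toMul a) i)
      map_zero' := by
        ext i
        simp
      map_add' := by
        intro a b
        ext i
        simp }
  have hf : Function.Injective f := by
    intro a b hab
    apply Additive.toMul.injective
    apply hinj
    ext i
    have := congrFun hab i
    exact Multiplicative.toAdd.injective this
  haveI : IsNoetherian ℤ (Additive K) := isNoetherian_of_injective f.toIntLinearMap hf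
  haveI : Module.Finite ℤ (Additive K) := ⟨IsNoetherian.noetherian ⊤⟩
  have : AddGroup.FG (Additive K) := Module.Finite.iff_addGroup_fg.mp ‹_›
  exact GroupFG.iff_add_fg.mpr this

end FGEmbed

section Triangular

variable {A : Type*} [CommGroup A] {J : Type*}


/-- triangular data of length `t` -/
def GoodData (θ : A →* (J → Multiplicative ℤ)) (t : ℕ) : Prop :=
  ∃ (a : Fin t → A) (j : Fin t → J),
    (∀ u, θ (a u) (j u) ≠ 1) ∧ (∀ u v : Fin t, v < u → θ (a u) (j v) = 1)

lemma good_or_sep (θ : A →* (J → Multiplicative ℤ)) (hinj : Function.Injective θ) (t : ℕ) :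
    GoodData θ t ∨ ∃ s : Finset J, ∀ x : A, (∀ i ∈ s, θ x i = 1) → x = 1 := by
  classical
  induction t with
  | zero => exact Or.inl ⟨Fin.elim0, Fin.elim0, fun u => u.elim0, fun u => u.elim0⟩
  | succ t ih =>
    rcases ih with ⟨a, j, hdiag, htri⟩ | hsep
    · by_cases hex : ∃ x : A, x ≠ 1 ∧ ∀ i ∈ Finset.univ.image j, θ x i = 1
      · obtain ⟨x, hx1, hxv⟩ := hex
        have hθx : θ x ≠ 1 := fun h => hx1 (hinj (by rw [h, map_one]))
        have hj0ex : ∃ j0, θ x j0 ≠ 1 := by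
          by_contra hcon
          push_neg at hcon
          exact hθx (funext hcon)
        obtain ⟨j0, hj0⟩ := hj0ex
        refine Or.inl ⟨Fin.snoc a x, Fin.snoc j j0, ?_, ?_⟩
        · intro u
          rcases Fin.eq_castSucc_or_eq_last u with ⟨u', rfl⟩ | rfl
          · simpa using hdiag u'
          · simpa using hj0
        · intro u v huv
          rcases Fin.eq_castSucc_or_eq_last u with ⟨u', rfl⟩ | rfl
          · have hvlt : v < Fin.last t := lt_trans huv (Fin.castSucc_lt_last u')
            obtain ⟨v', rfl⟩ := Fin.exists_castSucc_eq.mpr (Fin.ne_of_lt hvlt)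
            simp only [Fin.snoc_castSucc]
            exact htri u' v' (by exact_mod_cast huv)
          · obtain ⟨v', rfl⟩ := Fin.exists_castSucc_eq.mpr (Fin.ne_of_lt huv)
            simp only [Fin.snoc_last, Fin.snoc_castSucc]
            exact hxv _ (Finset.mem_image_of_mem j (Finset.mem_univ v'))
      · push_neg at hex
        refine Or.inr ⟨Finset.univ.image j, fun x hx => ?_⟩
        by_contra hx1
        obtain ⟨i, hi, hne⟩ := hex x hx1
        exact hne (hx i hi)
    · exact Or.inr hsep

set_option maxHeartbeats 2000000 in
lemma not_good (θ : A →* (J → Multiplicative ℤ)) {n : ℕ} (hA : NGen n A) :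
    ¬ GoodData θ (n + 1) := by
  classical
  rintro ⟨a, j, hdiag, htri⟩
  obtain ⟨T, hTc, hT⟩ := hA (Finset.univ.image a)
  -- the "coordinate" map into ℚ^{n+1}
  set c : A → (Fin (n + 1) → ℚ) :=
    fun x v => ((Multiplicative.toAdd (θ x (j v)) : ℤ) : ℚ) with hc
  have hmul : ∀ x y : A, c (x * y) = c x + c y := by
    intro x y
    funext v
    simp [hc, map_mul]
  have hone : c 1 = 0 := by
    funext v
    simp [hc]
  have hinv : ∀ x : A, c x⁻¹ = - c x := by
    intro x
    funext v
    simp [hc]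
  set W := Submodule.span ℚ (c '' (T : Set A)) with hW
  have hmemW : ∀ x ∈ Subgroup.closure (T : Set A), c x ∈ W := by
    intro x hx
    induction hx using Subgroup.closure_induction with
    | mem y hy => exact Submodule.subset_span ⟨y, hy, rfl⟩
    | one => rw [hone]; exact W.zero_mem
    | mul y z _ _ hy hz => rw [hmul]; exact W.add_mem hy hz
    | inv y _ hy => rw [hinv]; exact W.neg_mem hy
  have hmemA : ∀ u : Fin (n + 1), c (a u) ∈ W := by
    intro u
    apply hmemW
    rw [hT]
    exact Subgroup.subset_closure (Finset.mem_image_of_mem a (Finset.mem_univ u))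
  -- linear independence of the c (a u)
  have hli : LinearIndependent ℚ (fun u : Fin (n+1) => c (a u)) := by
    rw [Fintype.linearIndependent_iff]
    intro g hg
    have key : ∀ k : ℕ, ∀ hk : k < n + 1, g ⟨k, hk⟩ = 0 := by
      intro k
      induction k using Nat.strong_induction_on with
      | _ k ihk =>
        intro hk
        have hs := congrFun hg ⟨k, hk⟩
        simp only [Finset.sum_apply, Pi.smul_apply, smul_eq_mul, Pi.zero_apply] at hs
        rw [Finset.sum_eq_single (⟨k, hk⟩ : Fin (n+1))] at hs
        · have hdnz : c (a ⟨k, hk⟩) ⟨k, hk⟩ ≠ 0 := by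
            simp only [hc]
            intro hzero
            apply hdiag ⟨k, hk⟩
            have : (Multiplicative.toAdd (θ (a ⟨k, hk⟩) (j ⟨k, hk⟩)) : ℤ) = 0 := by
              exact_mod_cast hzero
            exact Multiplicative.toAdd.injective (by simpa using this)
          exact (mul_eq_zero.mp hs).resolve_right hdnz
        · intro b _ hbne
          rcases lt_or_gt_of_ne (fun h : b.1 = k => hbne (Fin.ext h)) with hlt | hgt
          · rw [ihk b.1 hlt b.2]
            ring
          · have : c (a b) ⟨k, hk⟩ = 0 := by
              simp only [hc]
              rw [htri b ⟨k, hk⟩ (by exact_mod_cast hgt)]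
              simp
            rw [this]
            ring
        · intro hnm
          exact absurd (Finset.mem_univ _) hnm
    intro i
    exact key i.1 i.2
  -- dimension count
  haveI : FiniteDimensional ℚ W := FiniteDimensional.span_of_finite ℚ (T.finite_toSet.image c)
  have hv' : LinearIndependent ℚ (fun u : Fin (n+1) => (⟨c (a u), hmemA u⟩ : W)) := by
    apply hli.of_comp W.subtype
  have hcard := hv'.fintype_card_le_finrank
  have hfr : Module.finrank ℚ W ≤ n := by
    have e : ((T.image c : Finset (Fin (n+1) → ℚ)) : Set (Fin (n+1) → ℚ)) = c '' (T : Set A) :=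
      Finset.coe_image
    have h1 := finrank_span_finset_le_card (R := ℚ) (T.image c)
    rw [Set.finrank, e] at h1
    exact le_trans (le_trans h1 Finset.card_image_le) hTc
  rw [Fintype.card_fin] at hcard
  omega

/-- main Specker-type lemma: a commutative group embedding into a power of ℤ,
all of whose finitely generated subgroups are n-generated, is finitely generated -/
lemma fg_of_ngen_pi_int (θ : A →* (J → Multiplicative ℤ)) (hinj : Function.Injective θ)
    {n : ℕ} (hA : NGen n A) : Group.FG A := by
  rcases good_or_sep θ hinj (n + 1) with hgood | ⟨s, hsep⟩
  · exact absurd hgood (not_good θ hA)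
  · let Φ : A →* ({ i // i ∈ s } → Multiplicative ℤ) :=
      { toFun := fun x => fun i => θ x i.1
        map_one' := by funext i; simp
        map_mul' := by intro x y; funext i; simp }
    have hΦ : Function.Injective Φ := by
      intro x y hxy
      have : x * y⁻¹ = 1 := by
        apply hsep
        intro i hi
        have := congrFun hxy ⟨i, hi⟩
        simp only [Φ, MonoidHom.coe_mk, OneHom.coe_mk] at this
        rw [map_mul, map_inv]
        simp [Pi.mul_apply, Pi.inv_apply, this]
      rw [mul_inv_eq_one] at this
      exact this
    exact fg_of_injective_pi_int Φ hΦ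

end Triangular


section Ext

/-- extension of f.g. by f.g. is f.g. -/
lemma fg_of_fg_normal_fg_quotient {G : Type*} [Group G] (N : Subgroup G) [N.Normal]
    (h1 : Group.FG ↥N) (h2 : Group.FG (G ⧸ N)) : Group.FG G := by
  obtain ⟨S1, hS1top, hS1fin⟩ := Group.fg_iff.mp h1
  obtain ⟨S2, hS2top, hS2fin⟩ := Group.fg_iff.mp h2
  set SN : Set G := (N.subtype) '' S1 with hSN
  set L : Set G := (fun q : G ⧸ N => Quotient.out q) '' S2 with hL
  have hSNclo : Subgroup.closure SN = N := by
    rw [hSN, ← MonoidHom.map_closure, hS1top, ← MonoidHom.range_eq_map, Subgroup.range_subtype]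
  set K := Subgroup.closure (SN ∪ L) with hK
  have hNK : N ≤ K := by
    rw [← hSNclo]
    exact Subgroup.closure_mono Set.subset_union_left
  have hLK : Subgroup.closure L ≤ K := Subgroup.closure_mono Set.subset_union_right
  have htop : K = ⊤ := by
    rw [eq_top_iff]
    intro g _
    have hmk : (QuotientGroup.mk' N) g ∈ Subgroup.closure S2 := by
      rw [hS2top]; trivial
    have himg : (⇑(QuotientGroup.mk' N)) '' L = S2 := by
      rw [hL, Set.image_image]
      have he : (fun q : G ⧸ N => (QuotientGroup.mk' N) (Quotient.out q)) = id := by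
        funext q
        exact QuotientGroup.out_eq' q
      rw [he, Set.image_id]
    rw [← himg, ← MonoidHom.map_closure (QuotientGroup.mk' N)] at hmk
    obtain ⟨k, hk, hkg⟩ := hmk
    have : k⁻¹ * g ∈ N := by
      rw [← QuotientGroup.eq]
      exact hkg
    have hg : g = k * (k⁻¹ * g) := by group
    rw [hg]
    exact K.mul_mem (hLK hk) (hNK this)
  exact Group.fg_iff.mpr ⟨SN ∪ L, htop,
    Set.Finite.union (hS1fin.image _) (hS2fin.image _)⟩

end Ext


section Rest

variable {G : Type*} [Group G]

/-- the centre of a torsion-free nilpotent group is isolated -/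
lemma center_isolated [Group.IsNilpotent G]
    (htf : ∀ g : G, g ≠ 1 → ¬ IsOfFinOrder g)
    (x : G) (n : ℕ) (hn : 0 < n) (hx : x ^ n ∈ Subgroup.center G) : x ∈ Subgroup.center G := by
  rw [Subgroup.mem_center_iff] at hx ⊢
  intro g
  have : Commute g (x ^ n) := hx g
  exact malcev_commute htf x g n hn this

/-- the quotient by the centre of a torsion-free nilpotent group is torsion-free -/
lemma quotient_center_torsion_free [Group.IsNilpotent G]
    (htf : ∀ g : G, g ≠ 1 → ¬ IsOfFinOrder g) :
    ∀ q : G ⧸ Subgroup.center G, q ≠ 1 → ¬ IsOfFinOrder q := by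
  intro q hq hfin
  obtain ⟨n, hn, hqn⟩ := isOfFinOrder_iff_pow_eq_one.mp hfin
  obtain ⟨x, rfl⟩ := QuotientGroup.mk'_surjective (Subgroup.center G) q
  have hxn : x ^ n ∈ Subgroup.center G := by
    rw [← QuotientGroup.eq_one_iff (x ^ n)]
    rw [← map_pow] at hqn
    exact hqn
  exact hq (QuotientGroup.eq_one_iff x |>.mpr (center_isolated htf x n hn hxn))

end Rest


/-- a f.g. torsion-free commutative group embeds into a finite power of ℤ -/
lemma exists_embed_pi_int (Z : Type) [CommGroup Z] (hfg : Group.FG Z)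
    (htf : ∀ z : Z, z ≠ 1 → ¬ IsOfFinOrder z) :
    ∃ (ι : Type) (_ : Fintype ι) (e : Z →* (ι → Multiplicative ℤ)),
      Function.Injective e := by
  haveI : AddGroup.FG (Additive Z) := GroupFG.iff_add_fg.mp hfg
  haveI : Module.Finite ℤ (Additive Z) := Module.Finite.iff_addGroup_fg.mpr ‹_›
  haveI : NoZeroSMulDivisors ℤ (Additive Z) := by
    constructor
    intro k x h
    by_contra hc
    push_neg at hc
    obtain ⟨hk, hx⟩ := hc
    apply htf (Additive.toMul x) (by simpa using hx)
    apply isOfFinOrder_iff_pow_eq_one.mpr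
    refine ⟨k.natAbs, by omega, ?_⟩
    have h1 : (Additive.toMul x) ^ k = 1 := by
      have : Additive.ofMul ((Additive.toMul x) ^ k) = k • x := by
        simp
      apply Additive.ofMul.injective
      rw [this, h]
      simp
    have h2 : (Additive.toMul x) ^ (k.natAbs : ℤ) = 1 := by
      rcases Int.natAbs_eq k with he | he
      · rw [← he]; exact h1
      · rw [← neg_neg (k.natAbs : ℤ), ← he, zpow_neg, h1, inv_one]
    rw [← zpow_natCast]
    exact h2
  haveI : Module.Free ℤ (Additive Z) := Module.free_of_finite_type_torsion_free'
  set ι := Module.Free.ChooseBasisIndex ℤ (Additive Z) with hι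
  haveI : Fintype ι := Module.Free.ChooseBasisIndex.fintype ℤ (Additive Z)
  set b := Module.Free.chooseBasis ℤ (Additive Z) with hb
  refine ⟨ι, inferInstance, ?_, ?_⟩
  · exact
      { toFun := fun z => fun i => Multiplicative.ofAdd (b.repr (Additive.ofMul z) i)
        map_one' := by
          funext i
          simp
        map_mul' := by
          intro x y
          funext i
          simp [ofMul_mul] }
  · intro x y hxy
    have : b.repr (Additive.ofMul x) = b.repr (Additive.ofMul y) := by
      ext i
      have := congrFun hxy i
      simpa using this
    have := b.repr.injective this
    exact Additive.ofMul.injective this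


open scoped IsMulCommutative

section Key

variable {G : Type} [Group G]

/-- commutator is multiplicative in the first argument when values are central -/
lemma comm_mul_first (x y g : G) (hy : ⁅y, g⁆ ∈ Subgroup.center G) :
    ⁅x * y, g⁆ = ⁅x, g⁆ * ⁅y, g⁆ := by
  have hc : ∀ a : G, a * ⁅y, g⁆ = ⁅y, g⁆ * a := Subgroup.mem_center_iff.mp hy
  have h1 : y * g * y⁻¹ = ⁅y, g⁆ * g := by group
  have h2 : ⁅x * y, g⁆ = x * (y * g * y⁻¹) * x⁻¹ * g⁻¹ := by group
  rw [h2, h1]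
  have h3 : x * (⁅y, g⁆ * g) * x⁻¹ * g⁻¹ = (x * ⁅y, g⁆) * (g * x⁻¹ * g⁻¹) := by group
  rw [h3, hc x]
  have h4 : ⁅y, g⁆ * x * (g * x⁻¹ * g⁻¹) = ⁅y, g⁆ * ⁅x, g⁆ := by group
  rw [h4]
  exact (hc ⁅x, g⁆).symm

lemma center_quotient_center_fg (hz : Group.FG ↥(Subgroup.center G))
    (htf : ∀ g : G, g ≠ 1 → ¬ IsOfFinOrder g)
    {n : ℕ} (hngen : NGen n G) :
    Group.FG ↥(Subgroup.center (G ⧸ Subgroup.center G)) := by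
  classical
  set Z := Subgroup.center G with hZ
  set mk := QuotientGroup.mk' Z with hmk
  set Z₂ := Subgroup.comap mk (Subgroup.center (G ⧸ Z)) with hZ₂
  have hZle : Z ≤ Z₂ := by
    intro z hzmem
    show mk z ∈ Subgroup.center (G ⧸ Z)
    rw [Subgroup.mem_center_iff]
    intro q
    induction q using QuotientGroup.induction_on with
    | H g =>
      show QuotientGroup.mk g * mk z = mk z * QuotientGroup.mk g
      have : mk g * mk z = mk z * mk g := by
        rw [← map_mul, ← map_mul, Subgroup.mem_center_iff.mp hzmem g]
      exact this
  have hcomm_mem : ∀ (x : ↥Z₂) (g : G), ⁅(x : G), g⁆ ∈ Z := by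
    intro x g
    have hcx : (mk (x : G)) ∈ Subgroup.center (G ⧸ Z) := x.2
    rw [← QuotientGroup.eq_one_iff]
    show mk ⁅(x : G), g⁆ = 1
    have he : mk ⁅(x : G), g⁆ = ⁅mk (x : G), mk g⁆ := by
      simp [commutatorElement_def, map_mul]
    rw [he, commutatorElement_eq_one_iff_commute]
    exact (Subgroup.mem_center_iff.mp hcx (mk g)).symm
  have htfZ : ∀ z : ↥Z, z ≠ 1 → ¬ IsOfFinOrder z := by
    intro z hz1 hfin
    apply htf (z : G) (by simpa using fun h => hz1 (Subtype.ext h))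
    obtain ⟨k, hk, hzk⟩ := isOfFinOrder_iff_pow_eq_one.mp hfin
    apply isOfFinOrder_iff_pow_eq_one.mpr ⟨k, hk, ?_⟩
    have : ((z ^ k : ↥Z) : G) = 1 := by rw [hzk]; rfl
    rwa [SubgroupClass.coe_pow] at this
  obtain ⟨ι, hι, e, he⟩ := exists_embed_pi_int ↥Z hz htfZ
  -- the commutator pairing
  set ψ : ↥Z₂ →* (G × ι → Multiplicative ℤ) :=
    { toFun := fun x => fun p => e ⟨⁅(x : G), p.1⁆, hcomm_mem x p.1⟩ p.2
      map_one' := by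
        funext p
        show e ⟨⁅((1 : ↥Z₂) : G), p.1⁆, hcomm_mem 1 p.1⟩ p.2 = 1
        have h0 : (⟨⁅((1 : ↥Z₂) : G), p.1⁆, hcomm_mem 1 p.1⟩ : ↥Z) = 1 := by
          apply Subtype.ext
          show ⁅((1 : ↥Z₂) : G), p.1⁆ = 1
          rw [commutatorElement_eq_one_iff_commute]
          simp
        rw [h0, map_one]
        rfl
      map_mul' := by
        intro x y
        funext p
        have hsub : (⟨⁅((x * y : ↥Z₂) : G), p.1⁆, hcomm_mem (x * y) p.1⟩ : ↥Z)
            = ⟨⁅(x : G), p.1⁆, hcomm_mem x p.1⟩ * ⟨⁅(y : G), p.1⁆, hcomm_mem y p.1⟩ := by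
          apply Subtype.ext
          show ⁅((x : G) * (y : G)), p.1⁆ = ⁅(x : G), p.1⁆ * ⁅(y : G), p.1⁆
          exact comm_mul_first _ _ _ (hcomm_mem y p.1)
        show e ⟨⁅((x * y : ↥Z₂) : G), p.1⁆, hcomm_mem (x * y) p.1⟩ p.2
          = e ⟨⁅(x : G), p.1⁆, hcomm_mem x p.1⟩ p.2 * e ⟨⁅(y : G), p.1⁆, hcomm_mem y p.1⟩ p.2
        rw [hsub, map_mul]
        rfl } with hψ
  have hkerψ : ψ.ker = Z.subgroupOf Z₂ := by
    ext x
    rw [MonoidHom.mem_ker, Subgroup.mem_subgroupOf]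
    constructor
    · intro hx
      have hcomm1 : ∀ g : G, ⁅(x : G), g⁆ = 1 := by
        intro g
        have hje : (⟨⁅(x : G), g⁆, hcomm_mem x g⟩ : ↥Z) = 1 := by
          apply he
          rw [map_one]
          funext i
          have := congrFun hx (g, i)
          exact this
        exact congrArg Subtype.val hje
      rw [Subgroup.mem_center_iff]
      intro g
      exact ((commutatorElement_eq_one_iff_commute.mp (hcomm1 g)).symm).eq
    · intro hx
      funext p
      have h1 : ⁅(x : G), p.1⁆ = 1 :=
        commutatorElement_eq_one_iff_commute.mpr
          ((Subgroup.mem_center_iff.mp hx p.1).symm)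
      have h0 : (⟨⁅(x : G), p.1⁆, hcomm_mem x p.1⟩ : ↥Z) = 1 := Subtype.ext h1
      show e ⟨⁅(x : G), p.1⁆, hcomm_mem x p.1⟩ p.2 = 1
      rw [h0, map_one]
      rfl
  -- the range of ψ is finitely generated by the Specker argument
  have hNA : NGen n ↥ψ.range :=
    (hngen.subgroup Z₂).of_surjective ψ.rangeRestrict ψ.rangeRestrict_surjective
  have hfgA : Group.FG ↥ψ.range :=
    fg_of_ngen_pi_int ψ.range.subtype (Subgroup.subtype_injective _) hNA
  -- Z₂ is finitely generated (extension of range by kernel)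
  have hfgK : Group.FG ↥ψ.ker := by
    rw [hkerψ]
    haveI := hz
    exact Group.fg_of_surjective (f := ((Subgroup.subgroupOfEquivOfLe hZle).symm.toMonoidHom))
      (MulEquiv.surjective _)
  have hfgQ : Group.FG (↥Z₂ ⧸ ψ.ker) := by
    haveI := hfgA
    exact Group.fg_of_surjective
      (f := (QuotientGroup.quotientKerEquivRange ψ).symm.toMonoidHom)
      (MulEquiv.surjective _)
  have hfgZ₂ : Group.FG ↥Z₂ := fg_of_fg_normal_fg_quotient ψ.ker hfgK hfgQ
  -- push forward to the center of the quotient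
  have hmap : Subgroup.map mk Z₂ = Subgroup.center (G ⧸ Z) :=
    Subgroup.map_comap_eq_self_of_surjective (QuotientGroup.mk'_surjective Z) _
  rw [← hmap]
  haveI := hfgZ₂
  exact Group.fg_of_surjective (f := mk.subgroupMap Z₂)
    (MonoidHom.subgroupMap_surjective mk Z₂)

end Key

section Main

lemma main_aux (c : ℕ) : ∀ (G : Type) [Group G] [Group.IsNilpotent G],
    Group.nilpotencyClass G ≤ c →
    (∀ g : G, g ≠ 1 → ¬ IsOfFinOrder g) → ∀ n : ℕ, NGen n G →
    Group.FG ↥(Subgroup.center G) → Group.FG G := by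
  induction c with
  | zero =>
    intro G _ _ hc _ n _ _
    haveI : Subsingleton G :=
      nilpotencyClass_zero_iff_subsingleton.mp (Nat.le_zero.mp hc)
    exact Group.fg_of_finite
  | succ c ih =>
    intro G _ _ hc htf n hngen hz
    have hq : Group.nilpotencyClass (G ⧸ Subgroup.center G) ≤ c := by
      rw [nilpotencyClass_quotient_center]
      omega
    have htfQ := quotient_center_torsion_free htf
    have hnq : NGen n (G ⧸ Subgroup.center G) :=
      hngen.of_surjective (QuotientGroup.mk' (Subgroup.center G))
        (QuotientGroup.mk'_surjective (Subgroup.center G))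
    have hzq : Group.FG ↥(Subgroup.center (G ⧸ Subgroup.center G)) :=
      center_quotient_center_fg hz htf hngen
    have fgQ : Group.FG (G ⧸ Subgroup.center G) :=
      ih (G ⧸ Subgroup.center G) hq htfQ n hnq hzq
    exact fg_of_fg_normal_fg_quotient (Subgroup.center G) hz fgQ

end Main

/-- a torsion-free nilpotent group of finite Hirsch length with finitely
generated centre is finitely generated. -/
theorem stmt_13 (G : Type) [Group G] (hnil : Group.IsNilpotent G)
    (htf : ∀ g : G, g ≠ 1 → ¬ IsOfFinOrder g)
    (hh : HasFiniteHirschLength G)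
    (hz : Group.FG (Subgroup.center G)) :
    Group.FG G := by
  haveI := hnil
  obtain ⟨n, hhn⟩ := hh
  exact main_aux (Group.nilpotencyClass G) G le_rfl htf n (ngen_of_hirsch hhn) hz
end
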